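/- arXiv:2005.02391 — 10 statements merged into one kernel-verified Lean document; each statement's English description precedes it below -/
import Mathlib

section
/- For all natural numbers M ≥ 1, all j with 0 ≤ j ≤ M, the identity ∑_{k=0}^{j} (-1)^{j-k} 2^{4k} ((4M+2)/(2k+1)) C(2(M−k), j−k) C(M+k, 2k) = C(4M+2, 2j+1) holds, where C(n,k) denotes the binomial coefficient (with C(n,k)=0 if k<0 or n<k). -/
open Polynomial Finset

noncomputable def bb (M k : ℕ) : ℚ :=
  2 * 16 ^ k * ((4 * M + 2 : ℚ) / (2 * k + 1)) * ((M + k).choose (2 * k) : ℚ)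

noncomputable def gg (M k : ℕ) : Polynomial ℚ :=
  C (bb M k) * (X ^ (2 * k + 1) * (1 - X ^ 2) ^ (2 * (M - k)))

noncomputable def SS (M : ℕ) : Polynomial ℚ := ∑ k ∈ range (M + 1), gg M k

lemma bb_rec (M i : ℕ) (hi : i ≤ M + 1) :
    bb (M + 2) (i + 1) + bb M (i + 1) = 2 * bb (M + 1) (i + 1) + 16 * bb (M + 1) i := by
  have h1 : (M+i+3).choose (2*i+2) = (M+i+2).choose (2*i+1) + (M+i+2).choose (2*i+2) :=
    Nat.choose_succ_succ _ _
  have h2 : (M+i+2).choose (2*i+2) = (M+i+1).choose (2*i+1) + (M+i+1).choose (2*i+2) :=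
    Nat.choose_succ_succ _ _
  have h3 : (M+i+2).choose (2*i+1) = (M+i+1).choose (2*i) + (M+i+1).choose (2*i+1) :=
    Nat.choose_succ_succ _ _
  have h4 : (M+i+1).choose (2*i+1) * (2*i+1) = (M+i+1).choose (2*i) * (M+1-i) := by
    have h := Nat.choose_succ_right_eq (M+i+1) (2*i)
    have e : M+i+1-2*i = M+1-i := by omega
    rw [e] at h; exact h
  have hA : ((M+i+3).choose (2*i+2) : ℚ)
      = (M+i+1).choose (2*i) + 2*((M+i+1).choose (2*i+1) : ℚ) + (M+i+1).choose (2*i+2) := by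
    rw [h1, h2, h3]; push_cast; ring
  have hB : ((M+i+2).choose (2*i+2) : ℚ)
      = ((M+i+1).choose (2*i+1) : ℚ) + (M+i+1).choose (2*i+2) := by
    rw [h2]; push_cast; ring
  have hD : ((M+i+1).choose (2*i+1) : ℚ) * (2*i+1)
      = ((M+i+1).choose (2*i) : ℚ) * ((M:ℚ)+1-(i:ℚ)) := by
    have hc : ((M+i+1).choose (2*i+1) * (2*i+1) : ℚ) = ((M+i+1).choose (2*i) * (M+1-i : ℕ) : ℚ) := by
      exact_mod_cast congrArg (Nat.cast : ℕ → ℚ) h4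
    rw [Nat.cast_sub (by omega : i ≤ M+1)] at hc
    push_cast at hc ⊢; linarith
  simp only [bb]
  have e1 : M + 2 + (i+1) = M+i+3 := by ring
  have e2 : M + (i+1) = M+i+1 := by ring
  have e3 : M + 1 + (i+1) = M+i+2 := by ring
  have e4 : M + 1 + i = M+i+1 := by ring
  have e5 : 2*(i+1) = 2*i+2 := by ring
  rw [e1, e2, e3, e4, e5, hA, hB]
  push_cast
  have d1 : (2*((i:ℚ)+1)+1) ≠ 0 := by positivity
  have d2 : (2*(i:ℚ)+1) ≠ 0 := by positivity
  field_simp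
  linear_combination (128 * (16:ℚ)^i) * hD

lemma bb_zero_rec (M : ℕ) : bb (M + 2) 0 + bb M 0 = 2 * bb (M + 1) 0 := by
  simp only [bb]; push_cast; norm_num; ring

lemma bb_vanish (M k : ℕ) (h : M < k) : bb M k = 0 := by
  have : (M + k).choose (2 * k) = 0 := by apply Nat.choose_eq_zero_of_lt; omega
  simp [bb, this]

lemma SS_rec (M : ℕ) :
    SS (M + 2) = (2 + 12 * X ^ 2 + 2 * X ^ 4) * SS (M + 1) - (1 - X ^ 2) ^ 4 * SS M := by
  have factor : (2 + 12 * X ^ 2 + 2 * X ^ 4 : Polynomial ℚ)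
      = 2 * (1 - X ^ 2) ^ 2 + 16 * X ^ 2 := by ring
  have hS1 : 2 * (1 - X ^ 2) ^ 2 * SS (M + 1)
      = ∑ k ∈ range (M + 3),
          C (2 * bb (M + 1) k) * (X ^ (2 * k + 1) * (1 - X ^ 2) ^ (2 * (M + 2 - k))) := by
    rw [sum_range_succ, bb_vanish (M+1) (M+2) (by omega)]
    simp only [SS, mul_sum]
    rw [mul_zero, C_0, zero_mul, add_zero]
    refine sum_congr rfl fun k hk => ?_
    have hk' : k ≤ M + 1 := by simpa using Nat.lt_succ_iff.mp (mem_range.mp hk)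
    unfold gg
    have e : 2 * (M + 2 - k) = 2 * (M + 1 - k) + 2 := by omega
    rw [e, pow_add, C_mul]
    have : (C 2 : Polynomial ℚ) = 2 := map_ofNat C 2
    rw [this]; ring
  have hS2 : 16 * X ^ 2 * SS (M + 1)
      = ∑ k ∈ range (M + 3),
          (if k = 0 then 0 else
            C (16 * bb (M + 1) (k - 1)) * (X ^ (2 * k + 1) * (1 - X ^ 2) ^ (2 * (M + 2 - k)))) := by
    rw [sum_range_succ']
    simp only [Nat.succ_ne_zero, if_false, if_true, ite_false, ite_true, add_zero, Nat.add_sub_cancel]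
    simp only [SS, mul_sum]
    refine sum_congr rfl fun k hk => ?_
    unfold gg
    have e : 2 * (M + 2 - (k + 1)) = 2 * (M + 1 - k) := by omega
    have e2 : 2 * (k + 1) + 1 = (2 * k + 1) + 2 := by omega
    rw [e, e2, pow_add, C_mul]
    have : (C 16 : Polynomial ℚ) = 16 := map_ofNat C 16
    rw [this]; ring
  have hS3 : (1 - X ^ 2) ^ 4 * SS M
      = ∑ k ∈ range (M + 3),
          C (bb M k) * (X ^ (2 * k + 1) * (1 - X ^ 2) ^ (2 * (M + 2 - k))) := by
    rw [sum_range_succ, sum_range_succ, bb_vanish M (M+2) (by omega), bb_vanish M (M+1) (by omega)]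
    simp only [SS, mul_sum, C_0, zero_mul, add_zero]
    refine sum_congr rfl fun k hk => ?_
    have hk' : k ≤ M := by simpa using Nat.lt_succ_iff.mp (mem_range.mp hk)
    unfold gg
    have e : 2 * (M + 2 - k) = 2 * (M - k) + 4 := by omega
    rw [e, pow_add]; ring
  rw [factor, add_mul, hS1, hS2, hS3, ← sum_add_distrib, ← sum_sub_distrib]
  unfold SS
  refine sum_congr rfl fun k hk => ?_
  have hk' : k ≤ M + 2 := by simpa using Nat.lt_succ_iff.mp (mem_range.mp hk)
  unfold gg
  rcases Nat.eq_zero_or_pos k with rfl | hkpos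
  · have hsc : bb (M + 2) 0 = 2 * bb (M + 1) 0 - bb M 0 := by linarith [bb_zero_rec M]
    rw [if_pos rfl, hsc, C_sub, C_mul]
    ring
  · obtain ⟨i, rfl⟩ := Nat.exists_eq_add_of_le hkpos
    have hi : i ≤ M + 1 := by omega
    have hsc : bb (M + 2) (1 + i) = 2 * bb (M + 1) (1 + i) + 16 * bb (M + 1) i - bb M (1 + i) := by
      have := bb_rec M i hi
      have e : 1 + i = i + 1 := by omega
      rw [e]; linarith
    rw [if_neg (by omega), hsc]
    have e3 : 1 + i - 1 = i := by omega
    rw [e3, C_sub, C_add, C_mul, C_mul]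
    ring

lemma key : ∀ M : ℕ, (1 + X : Polynomial ℚ) ^ (4 * M + 2) - (1 - X) ^ (4 * M + 2) = SS M := by
  intro M
  induction M using Nat.twoStepInduction with
  | zero =>
    simp only [SS, sum_range_one, gg, bb]
    norm_num
    rw [show (C 2 : Polynomial ℚ) = 2 from map_ofNat C 2]
    ring
  | one =>
    simp only [SS, sum_range_succ, sum_range_one, gg, bb]
    norm_num
    rw [show (C 12 : Polynomial ℚ) = 12 from map_ofNat C 12,
        show (C 64 : Polynomial ℚ) = 64 from map_ofNat C 64]
    ring
  | more M ih1 ih2 =>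
    rw [SS_rec, ← ih1, ← ih2]
    have e1 : 4 * (M + 2) + 2 = (4 * M + 2) + 8 := by ring
    have e2 : 4 * (M + 1) + 2 = (4 * M + 2) + 4 := by ring
    rw [e1, e2, pow_add, pow_add, pow_add, pow_add]
    ring

lemma coeff_one_sub_X_pow (n k : ℕ) :
    ((1 - X : Polynomial ℚ) ^ n).coeff k = (-1) ^ k * (n.choose k : ℚ) := by
  have h : (1 - X : Polynomial ℚ) = -1 * (X + C (-1)) := by
    rw [C_neg, C_1]; ring
  rw [h, mul_pow, ← C_1, ← C_neg, ← C_pow, coeff_C_mul, coeff_X_add_C_pow]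
  rcases le_or_gt k n with hk | hk
  · rw [← mul_assoc, ← pow_add]
    have e : n + (n - k) = 2 * (n - k) + k := by omega
    rw [e, pow_add, pow_mul]
    norm_num
  · rw [Nat.choose_eq_zero_of_lt hk]
    push_cast; ring

lemma one_sub_X_sq_pow_expand (E : ℕ) :
    (1 - X ^ 2 : Polynomial ℚ) ^ E
      = ∑ i ∈ range (E + 1), C ((-1) ^ i * (E.choose i : ℚ)) * X ^ (2 * i) := by
  rw [sub_eq_add_neg, add_comm, add_pow]
  refine sum_congr rfl fun i _ => ?_
  rw [C_mul, C_pow, C_neg, C_1, C_eq_natCast]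
  ring

lemma coeff_sum_even (f : ℕ → ℚ) (n r : ℕ) :
    (∑ i ∈ range n, C (f i) * X ^ (2 * i)).coeff (2 * r) = if r < n then f r else 0 := by
  rw [finset_sum_coeff]
  simp only [coeff_C_mul, coeff_X_pow]
  have h : ∀ i, (if 2 * r = 2 * i then (1 : ℚ) else 0) = if r = i then 1 else 0 := by
    intro i
    by_cases hir : r = i
    · simp [hir]
    · rw [if_neg (by omega), if_neg hir]
  simp_rw [h, mul_ite, mul_one, mul_zero, Finset.sum_ite_eq (range n) r f, mem_range]

lemma coeff_one_sub_X_sq_pow (E r : ℕ) (hr : r ≤ 2 * E) :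
    ((1 - X ^ 2 : Polynomial ℚ) ^ E).coeff (2 * r) = (-1) ^ r * (E.choose r : ℚ) := by
  rw [one_sub_X_sq_pow_expand, coeff_sum_even]
  rcases le_or_gt r E with h | h
  · rw [if_pos (by omega)]
  · rw [Nat.choose_eq_zero_of_lt h]
    by_cases h2 : r < E + 1
    · omega
    · rw [if_neg h2]; push_cast; ring

lemma coeff_SS (M j : ℕ) (hj : j ≤ M) :
    (SS M).coeff (2 * j + 1)
      = ∑ k ∈ range (j + 1), bb M k * ((-1) ^ (j - k) * ((2 * (M - k)).choose (j - k) : ℚ)) := by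
  unfold SS
  rw [finset_sum_coeff]
  have hterm : ∀ k ∈ range (M + 1), (gg M k).coeff (2 * j + 1)
      = if k ≤ j then bb M k * ((-1) ^ (j - k) * ((2 * (M - k)).choose (j - k) : ℚ)) else 0 := by
    intro k _
    unfold gg
    rw [coeff_C_mul, mul_comm (X ^ (2 * k + 1)) ((1 - X ^ 2) ^ (2 * (M - k))), coeff_mul_X_pow']
    by_cases hkj : k ≤ j
    · rw [if_pos (by omega), if_pos hkj]
      have e : 2 * j + 1 - (2 * k + 1) = 2 * (j - k) := by omega
      rw [e, coeff_one_sub_X_sq_pow _ _ (by omega)]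
    · rw [if_neg (by omega), if_neg hkj, mul_zero]
  rw [sum_congr rfl hterm]
  rw [← Finset.sum_subset (Finset.range_subset_range.2 (by omega : j + 1 ≤ M + 1))
      (fun x _ hx => if_neg (by simp at hx; omega))]
  exact sum_congr rfl fun k hk => if_pos (by simp at hk; omega)

theorem stmt_0 (M j : ℕ) (hM : 1 ≤ M) (hj : j ≤ M) :
    ∑ k ∈ Finset.range (j + 1),
      (-1 : ℚ) ^ (j - k) * 2 ^ (4 * k) * ((4 * M + 2 : ℚ) / (2 * k + 1)) *
        ((2 * (M - k)).choose (j - k)) * ((M + k).choose (2 * k))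
    = ((4 * M + 2).choose (2 * j + 1) : ℚ) := by
  have hc := congrArg (fun p : Polynomial ℚ => p.coeff (2 * j + 1)) (key M)
  simp only [coeff_sub] at hc
  rw [coeff_one_add_X_pow, coeff_one_sub_X_pow, coeff_SS M j hj] at hc
  have h1 : ((-1 : ℚ)) ^ (2 * j + 1) = -1 := by
    rw [pow_succ, pow_mul]; norm_num
  rw [h1] at hc
  have h2 : ∑ k ∈ range (j + 1), bb M k * ((-1) ^ (j - k) * ((2 * (M - k)).choose (j - k) : ℚ))
      = 2 * ∑ k ∈ Finset.range (j + 1),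
          (-1 : ℚ) ^ (j - k) * 2 ^ (4 * k) * ((4 * M + 2 : ℚ) / (2 * k + 1)) *
            ((2 * (M - k)).choose (j - k)) * ((M + k).choose (2 * k)) := by
    rw [Finset.mul_sum]
    refine sum_congr rfl fun k _ => ?_
    unfold bb
    rw [pow_mul]
    norm_num
    ring
  rw [h2] at hc
  linarith
end

section
/- For all natural numbers M ≥ 1 and all j with 0 ≤ j ≤ M, the identity ∑_{k=0}^{j} (-1)^{j-k} 2^{4k} (M/(M+k)) C(2(M−k), j−k) C(M+k, 2k) = C(4M, 2j) holds over the rationals. -/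
private lemma chooseA (n m : ℕ) :
    n.choose (m+1) * (m+1) + n.choose m * m = n.choose m * n := by
  rcases le_or_gt m n with h | h
  · rw [Nat.choose_succ_right_eq, ← Nat.mul_add, Nat.sub_add_cancel h]
  · rw [Nat.choose_eq_zero_of_lt h, Nat.choose_eq_zero_of_lt (by omega)]
    simp

private lemma chooseB (n m : ℕ) :
    (n-1).choose m * n = n.choose m * (n - m) := by
  cases n with
  | zero => simp
  | succ p => simpa using Nat.choose_mul_succ_eq p m

/-- WZ certificate function. -/
def Wf (M j k : ℕ) : ℚ :=
  -(-1 : ℚ) ^ (j + 1 - k) * 2 ^ (4 * k) *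
      (2 * (M:ℚ) * k * (2 * (k:ℚ) - 1) * (2 * (M:ℚ) - 2 * k + 1)) /
      ((2 * (j:ℚ) + 1) * (2 * (j:ℚ) + 2) * ((M:ℚ) + k) * (2 * (M:ℚ) - k - j)) *
    ((2 * (M - k)).choose (j + 1 - k) : ℚ) * (((M + k).choose (2 * k)) : ℚ)

private lemma scalar_key (m q r : ℚ)
    (d1 : q - r + 1 ≠ 0) (d2 : 2 * m - 2 * r ≠ 0) (d3 : 2 * m - 2 * r - 1 ≠ 0)
    (d4 : 2 * m - r - q ≠ 0) (d5 : 2 * m - r - q - 1 ≠ 0) (d6 : m + r ≠ 0)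
    (d7 : m + r + 1 ≠ 0) (d8 : 2 * q + 1 ≠ 0) (d9 : 2 * q + 2 ≠ 0)
    (d10 : 2 * r + 1 ≠ 0) (d11 : 2 * r + 2 ≠ 0) :
    -1 * (m / (m + r)) * ((2 * m - r - q) / (q - r + 1)) =
      (4 * m - 2 * q) * (4 * m - 2 * q - 1) / ((2 * q + 1) * (2 * q + 2)) * (m / (m + r)) +
        (-16 * (2 * m * (r + 1) * (2 * r + 1) * (2 * m - 2 * r - 1)) /
                ((2 * q + 1) * (2 * q + 2) * (m + r + 1) * (2 * m - r - q - 1)) *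
              ((2 * m - r - q) / (2 * m - 2 * r) * (2 * m - r - q - 1) / (2 * m - 2 * r - 1)) *
            ((m - r) / (2 * r + 1) * (m + r + 1) / (2 * r + 2)) -
          (2 * m * r * (2 * r - 1) * (2 * m - 2 * r + 1)) /
                ((2 * q + 1) * (2 * q + 2) * (m + r) * (2 * m - r - q)) *
              ((2 * m - r - q) / (q - r + 1))) := by
  simp only [mul_div_assoc', div_mul_eq_mul_div, div_div]
  rw [div_sub_div _ _ (by apply_rules [mul_ne_zero]) (by apply_rules [mul_ne_zero]),
    div_add_div _ _ (by apply_rules [mul_ne_zero]) (by apply_rules [mul_ne_zero]),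
    div_eq_div_iff (by apply_rules [mul_ne_zero]) (by apply_rules [mul_ne_zero])]
  ring

set_option maxHeartbeats 2000000 in
private lemma key_s1 (M j k : ℕ) (hjM : j + 1 ≤ M) (hk : k ≤ j) :
    (-1 : ℚ) ^ (j + 1 - k) * 2 ^ (4 * k) * ((M : ℚ) / (M + k)) *
        ((2 * (M - k)).choose (j + 1 - k)) * ((M + k).choose (2 * k))
      = (4 * (M:ℚ) - 2 * j) * (4 * (M:ℚ) - 2 * j - 1) /
            ((2 * (j:ℚ) + 1) * (2 * (j:ℚ) + 2)) *
          ((-1 : ℚ) ^ (j - k) * 2 ^ (4 * k) * ((M : ℚ) / (M + k)) *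
            ((2 * (M - k)).choose (j - k)) * ((M + k).choose (2 * k)))
        + (Wf M j (k+1) - Wf M j k) := by
  have hkM : k + 1 ≤ M := by omega
  have hkQ : (k:ℚ) ≤ j := by exact_mod_cast hk
  have hMQ : (k:ℚ) + 1 ≤ M := by exact_mod_cast hkM
  have hjMQ : (j:ℚ) + 1 ≤ M := by exact_mod_cast hjM
  -- index normalizations
  have e1 : j + 1 - k = (j - k) + 1 := by omega
  have e2 : j + 1 - (k+1) = j - k := by omega
  have e3 : 2 * (M - (k+1)) = 2*(M-k) - 1 - 1 := by omega
  have e5 : M + (k+1) = M + k + 1 := by omega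
  have e6 : 2 * (k+1) = 2*k + 1 + 1 := by omega
  have e7 : 4 * (k+1) = 4*k + 4 := by omega
  simp only [Wf, e1, e2, e3, e5, e6, e7]
  -- binomial relations over ℚ
  have h1 : ((2*(M-k)).choose ((j-k)+1) : ℚ) * ((j:ℚ) - k + 1)
      = ((2*(M-k)).choose (j-k) : ℚ) * (2*(M:ℚ) - k - j) := by
    have h := chooseA (2*(M-k)) (j-k)
    qify [hk, show k ≤ M by omega, Nat.sub_le] at h
    linear_combination h
  have h2 : ((2*(M-k)-1).choose (j-k) : ℚ) * (2*(M:ℚ) - 2*k)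
      = ((2*(M-k)).choose (j-k) : ℚ) * (2*(M:ℚ) - k - j) := by
    have h := chooseB (2*(M-k)) (j-k)
    qify [hk, show k ≤ M by omega, show j - k ≤ 2*(M-k) by omega] at h
    linear_combination h
  have h3 : ((2*(M-k)-1-1).choose (j-k) : ℚ) * (2*(M:ℚ) - 2*k - 1)
      = ((2*(M-k)-1).choose (j-k) : ℚ) * (2*(M:ℚ) - k - j - 1) := by
    have h := chooseB (2*(M-k)-1) (j-k)
    qify [hk, show k ≤ M by omega, show j - k ≤ 2*(M-k)-1 by omega,
      show (1:ℕ) ≤ 2*(M-k) by omega] at h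
    linear_combination h
  have h4 : ((M+k).choose (2*k+1) : ℚ) * (2*(k:ℚ) + 1)
      = ((M+k).choose (2*k) : ℚ) * ((M:ℚ) - k) := by
    have h := chooseA (M+k) (2*k)
    qify at h
    linear_combination h
  have h5 : ((M+k+1).choose (2*k+1+1) : ℚ) * (2*(k:ℚ) + 2)
      = ((M+k).choose (2*k+1) : ℚ) * ((M:ℚ) + k + 1) := by
    have h := Nat.add_one_mul_choose_eq (M+k) (2*k+1)
    qify at h
    linear_combination -h
  -- nonzero denominators
  have d1 : ((j:ℚ) - k + 1) ≠ 0 := by linarith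
  have d2 : (2*(M:ℚ) - 2*k) ≠ 0 := by linarith
  have d3 : (2*(M:ℚ) - 2*k - 1) ≠ 0 := by linarith
  have d4 : (2*(M:ℚ) - k - j) ≠ 0 := by linarith
  have d5 : (2*(M:ℚ) - k - j - 1) ≠ 0 := by linarith
  have d6 : ((M:ℚ) + k) ≠ 0 := by linarith
  have d7 : ((M:ℚ) + k + 1) ≠ 0 := by linarith
  have d8 : (2*(j:ℚ) + 1) ≠ 0 := by linarith
  have d9 : (2*(j:ℚ) + 2) ≠ 0 := by linarith
  have d10 : (2*(k:ℚ) + 1) ≠ 0 := by positivity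
  have d11 : (2*(k:ℚ) + 2) ≠ 0 := by positivity
  have d12 : ((M:ℚ)) ≠ 0 := by linarith
  -- solved forms
  have hx1 : ((2*(M-k)).choose ((j-k)+1) : ℚ)
      = ((2*(M-k)).choose (j-k) : ℚ) * (2*(M:ℚ) - k - j) / ((j:ℚ) - k + 1) := by
    field_simp
    linear_combination h1
  have hx2 : ((2*(M-k)-1-1).choose (j-k) : ℚ)
      = ((2*(M-k)-1).choose (j-k) : ℚ) * (2*(M:ℚ) - k - j - 1) / (2*(M:ℚ) - 2*k - 1) := by
    rw [eq_div_iff d3]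
    linear_combination h3
  have hx' : ((2*(M-k)-1).choose (j-k) : ℚ)
      = ((2*(M-k)).choose (j-k) : ℚ) * (2*(M:ℚ) - k - j) / (2*(M:ℚ) - 2*k) := by
    rw [eq_div_iff d2]
    linear_combination h2
  have hy2 : ((M+k+1).choose (2*k+1+1) : ℚ)
      = ((M+k).choose (2*k+1) : ℚ) * ((M:ℚ) + k + 1) / (2*(k:ℚ) + 2) := by
    field_simp
    linear_combination h5
  have hy' : ((M+k).choose (2*k+1) : ℚ)
      = ((M+k).choose (2*k) : ℚ) * ((M:ℚ) - k) / (2*(k:ℚ) + 1) := by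
    field_simp
    linear_combination h4
  rw [hx1, hx2, hx', hy2, hy']
  push_cast
  rw [pow_succ, pow_add]
  revert d1 d2 d3 d4 d5 d6 d7 d8 d9 d10 d11 d12
  generalize (((2 * (M - k)).choose (j - k) : ℕ) : ℚ) = x
  generalize (((M + k).choose (2 * k) : ℕ) : ℚ) = y
  generalize ((-1 : ℚ))^(j-k) = s
  generalize ((2 : ℚ))^(4*k) = p
  generalize ((M : ℕ) : ℚ) = m
  generalize ((j : ℕ) : ℚ) = q
  generalize ((k : ℕ) : ℚ) = r
  intro d1 d2 d3 d4 d5 d6 d7 d8 d9 d10 d11 d12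
  linear_combination (s * p * x * y) *
    scalar_key m q r d1 d2 d3 d4 d5 d6 d7 d8 d9 d10 d11


private lemma Wf_zero (M j : ℕ) : Wf M j 0 = 0 := by
  simp [Wf]

private lemma hBrec (M n : ℕ) (h : n + 1 ≤ M) :
    ((4*M).choose (2*(n+1)) : ℚ) * ((2*(n:ℚ)+1)*(2*(n:ℚ)+2))
      = ((4*M).choose (2*n) : ℚ) * ((4*(M:ℚ)-2*n)*(4*(M:ℚ)-2*n-1)) := by
  have e : 2*(n+1) = 2*n+1+1 := by omega
  rw [e]
  have hA := chooseA (4*M) (2*n)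
  have hB := chooseA (4*M) (2*n+1)
  qify at hA hB
  linear_combination (2*(n:ℚ)+1) * hB + (4*(M:ℚ)-2*(n:ℚ)-1) * hA

private lemma last_term (M n : ℕ) (h : n + 1 ≤ M) :
    (-1 : ℚ) ^ (n + 1 - (n+1)) * 2 ^ (4 * (n+1)) * ((M : ℚ) / (M + ((n+1):ℕ))) *
        ((2 * (M - (n+1))).choose (n + 1 - (n+1))) * ((M + (n+1)).choose (2 * (n+1)))
      = -Wf M n (n+1) := by
  have hMQ : (n:ℚ) + 1 ≤ M := by exact_mod_cast h
  simp only [Wf, Nat.sub_self, pow_zero, Nat.choose_zero_right, Nat.cast_one]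
  push_cast
  have d1 : ((M:ℚ) + (n+1)) ≠ 0 := by linarith
  have d2 : (2*(n:ℚ) + 1) ≠ 0 := by positivity
  have d3 : (2*(n:ℚ) + 2) ≠ 0 := by positivity
  have d4 : (2*(M:ℚ) - (n+1) - n) ≠ 0 := by linarith
  simp only [mul_div_assoc', div_mul_eq_mul_div, ← neg_div]
  rw [div_eq_div_iff (by apply_rules [mul_ne_zero]) (by apply_rules [mul_ne_zero])]
  ring

theorem stmt_1 (M j : ℕ) (hM : 1 ≤ M) (hj : j ≤ M) :
    ∑ k ∈ Finset.range (j + 1),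
      (-1 : ℚ) ^ (j - k) * 2 ^ (4 * k) * ((M : ℚ) / (M + k)) *
        ((2 * (M - k)).choose (j - k)) * ((M + k).choose (2 * k))
    = ((4 * M).choose (2 * j) : ℚ) := by
  have hM0 : ((M:ℚ)) ≠ 0 := by
    have : (1:ℚ) ≤ M := by exact_mod_cast hM
    linarith
  revert hj
  induction j with
  | zero =>
    intro _
    simp [div_self hM0]
  | succ n ih =>
    intro hj
    have ihv := ih (by omega)
    rw [Finset.sum_range_succ]
    rw [Finset.sum_congr rfl (fun k hk => by
      rw [key_s1 M n k hj (Nat.lt_succ_iff.mp (Finset.mem_range.mp hk))])]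
    rw [Finset.sum_add_distrib, ← Finset.mul_sum, ihv,
      Finset.sum_range_sub (Wf M n), Wf_zero, last_term M n hj]
    have hB := hBrec M n hj
    have d2 : (2*(n:ℚ) + 1) ≠ 0 := by positivity
    have d3 : (2*(n:ℚ) + 2) ≠ 0 := by positivity
    field_simp
    linear_combination (-1 : ℚ) * hB
end

section
/- For every natural number M ≥ 1 and every nonzero complex number z, (1/2)(z + 1/z)^{4M+2} − (1/2)(z − 1/z)^{4M+2} = ∑_{k=0}^{M} 2^{4k} ((4M+2)/(2k+1)) C(M+k, 2k) (z² − 1/z²)^{2(M−k)}. -/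
def uu (M k : ℕ) : ℕ := (M+k+1).choose (2*k+1) + (M+k).choose (2*k+1)

lemma u_eq_zero (M k : ℕ) (h : M < k) : uu M k = 0 := by
  simp only [uu]
  rw [Nat.choose_eq_zero_of_lt (show M+k+1 < 2*k+1 by omega),
    Nat.choose_eq_zero_of_lt (show M+k < 2*k+1 by omega)]

lemma u_diag (N : ℕ) : uu N N = 1 := by
  simp only [uu]
  rw [show N+N+1 = 2*N+1 by omega, Nat.choose_self,
    Nat.choose_eq_zero_of_lt (show N+N < 2*N+1 by omega)]

lemma u_zero (N : ℕ) : uu N 0 = 2*N+1 := by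
  simp only [uu]
  norm_num [Nat.choose_one_right]
  omega

lemma pas (a r : ℕ) :
    (a+4).choose (r+2) + (a+3).choose (r+2) + ((a+2).choose (r+2) + (a+1).choose (r+2))
      = 2*((a+3).choose (r+2) + (a+2).choose (r+2)) + ((a+2).choose r + (a+1).choose r) := by
  have h4 : (a+4).choose (r+2) = (a+3).choose (r+1) + (a+3).choose (r+2) :=
    Nat.choose_succ_succ (a+3) (r+1)
  have h2 : (a+2).choose (r+2) = (a+1).choose (r+1) + (a+1).choose (r+2) :=
    Nat.choose_succ_succ (a+1) (r+1)
  have g3 : (a+3).choose (r+1) = (a+2).choose r + (a+2).choose (r+1) :=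
    Nat.choose_succ_succ (a+2) r
  have g2 : (a+2).choose (r+1) = (a+1).choose r + (a+1).choose (r+1) :=
    Nat.choose_succ_succ (a+1) r
  omega

lemma u_rec (M k : ℕ) :
    uu (M+1+1) (k+1) + uu M (k+1) = 2 * uu (M+1) (k+1) + uu (M+1) k := by
  simp only [uu]
  rw [show M+1+1+(k+1)+1 = M+k+4 by omega, show M+1+1+(k+1) = M+k+3 by omega,
    show M+1+(k+1)+1 = M+k+3 by omega, show M+1+(k+1) = M+k+2 by omega,
    show M+(k+1)+1 = M+k+2 by omega, show M+(k+1) = M+k+1 by omega,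
    show M+1+k+1 = M+k+2 by omega, show M+1+k = M+k+1 by omega,
    show 2*(k+1)+1 = 2*k+3 by omega]
  exact pas (M+k) (2*k+1)

lemma ptwise (M k : ℕ) (hk : k < M+1+1) (w : ℂ) :
    2*16^(k+1)*((uu (M+1+1) (k+1) : ℂ))*w^(2*(M+1+1-(k+1)))
      + w^4*(2*16^(k+1)*((uu M (k+1) : ℂ))*w^(2*(M-(k+1))))
      - 2*w^2*(2*16^(k+1)*((uu (M+1) (k+1) : ℂ))*w^(2*(M+1-(k+1))))
    = 16*(2*16^k*((uu (M+1) k : ℂ))*w^(2*(M+1-k))) := by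
  have hcast : ((uu (M+1+1) (k+1) : ℂ)) + (uu M (k+1) : ℂ)
      = 2*(uu (M+1) (k+1) : ℂ) + (uu (M+1) k : ℂ) := by
    exact_mod_cast congrArg (Nat.cast : ℕ → ℂ) (u_rec M k)
  by_cases h : k+1 ≤ M
  · obtain ⟨j, rfl⟩ : ∃ j, M = k+1+j := ⟨M-(k+1), by omega⟩
    simp only [show 2*(k+1+j+1+1-(k+1)) = 2*j+4 by omega,
      show 2*(k+1+j-(k+1)) = 2*j by omega,
      show 2*(k+1+j+1-(k+1)) = 2*j+2 by omega,
      show 2*(k+1+j+1-k) = 2*j+4 by omega]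
    linear_combination (2*16^(k+1)*w^(2*j+4)) * hcast
  · by_cases h2 : k = M
    · subst h2
      simp only [show 2*(k+1+1-(k+1)) = 2 by omega, show 2*(k-(k+1)) = 0 by omega,
        show 2*(k+1-(k+1)) = 0 by omega, show 2*(k+1-k) = 2 by omega]
      rw [u_eq_zero k (k+1) (by omega)] at hcast ⊢
      push_cast at hcast ⊢
      linear_combination (2*16^(k+1)*w^2) * hcast
    · have h3 : k = M+1 := by omega
      subst h3
      simp only [show 2*(M+1+1-(M+1+1)) = 0 by omega, show 2*(M-(M+1+1)) = 0 by omega,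
        show 2*(M+1-(M+1+1)) = 0 by omega, show 2*(M+1-(M+1)) = 0 by omega]
      rw [u_eq_zero M (M+1+1) (by omega), u_eq_zero (M+1) (M+1+1) (by omega),
        u_diag (M+1+1), u_diag (M+1)]
      push_cast
      ring

lemma sum_rec (M : ℕ) (w : ℂ) :
    (2*w^2+16) * (∑ k ∈ Finset.range (M+1+1), 2*16^k*((uu (M+1) k : ℂ))*w^(2*(M+1-k)))
      - w^4 * (∑ k ∈ Finset.range (M+1), 2*16^k*((uu M k : ℂ))*w^(2*(M-k)))
    = ∑ k ∈ Finset.range (M+1+1+1), 2*16^k*((uu (M+1+1) k : ℂ))*w^(2*(M+1+1-k)) := by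
  have e1 : (∑ k ∈ Finset.range (M+1+1), 2*16^k*((uu (M+1) k : ℂ))*w^(2*(M+1-k)))
      = ∑ k ∈ Finset.range (M+1+1+1), 2*16^k*((uu (M+1) k : ℂ))*w^(2*(M+1-k)) := by
    apply Finset.sum_subset
    · apply Finset.range_subset_range.mpr; omega
    · intro x hx hx'
      have hxx : M+1 < x := by
        simp only [Finset.mem_range] at hx hx'; omega
      rw [u_eq_zero (M+1) x hxx]
      norm_num
  have e0 : (∑ k ∈ Finset.range (M+1), 2*16^k*((uu M k : ℂ))*w^(2*(M-k)))
      = ∑ k ∈ Finset.range (M+1+1+1), 2*16^k*((uu M k : ℂ))*w^(2*(M-k)) := by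
    apply Finset.sum_subset
    · apply Finset.range_subset_range.mpr; omega
    · intro x hx hx'
      have hxx : M < x := by
        simp only [Finset.mem_range] at hx hx'; omega
      rw [u_eq_zero M x hxx]
      norm_num
  have key : ∑ k ∈ Finset.range (M+1+1+1),
        (2*16^k*((uu (M+1+1) k : ℂ))*w^(2*(M+1+1-k))
          + w^4*(2*16^k*((uu M k : ℂ))*w^(2*(M-k)))
          - 2*w^2*(2*16^k*((uu (M+1) k : ℂ))*w^(2*(M+1-k))))
      = ∑ k ∈ Finset.range (M+1+1), 16*(2*16^k*((uu (M+1) k : ℂ))*w^(2*(M+1-k))) := by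
    rw [Finset.sum_range_succ']
    have h0 : 2*16^0*((uu (M+1+1) 0 : ℂ))*w^(2*(M+1+1-0))
        + w^4*(2*16^0*((uu M 0 : ℂ))*w^(2*(M-0)))
        - 2*w^2*(2*16^0*((uu (M+1) 0 : ℂ))*w^(2*(M+1-0))) = 0 := by
      rw [u_zero, u_zero, u_zero]
      simp only [Nat.sub_zero]
      push_cast
      ring
    rw [h0, add_zero]
    exact Finset.sum_congr rfl fun k hk => ptwise M k (by simpa using hk) w
  rw [Finset.sum_sub_distrib, Finset.sum_add_distrib, ← Finset.mul_sum, ← Finset.mul_sum,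
    ← Finset.mul_sum] at key
  rw [e1] at key
  rw [e1, e0]
  linear_combination -key

theorem aux_pow_identity (M : ℕ) (z : ℂ) (hz : z ≠ 0) :
    (1/2)*(z+1/z)^(4*M+2) - (1/2)*(z-1/z)^(4*M+2)
    = ∑ k ∈ Finset.range (M+1), 2*16^k*((uu M k : ℂ))*(z^2-1/z^2)^(2*(M-k)) := by
  induction M using Nat.strong_induction_on with
  | _ M ih =>
    rcases M with _|_|m
    · rw [Finset.sum_range_one, show uu 0 0 = 1 from rfl]
      norm_num
      field_simp
      ring
    · rw [Finset.sum_range_succ, Finset.sum_range_one,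
        show uu (0+1) 0 = 3 from rfl, show uu (0+1) (0+1) = 1 from rfl]
      norm_num
      field_simp
      ring
    · have ih1 := ih (m+1) (by omega)
      have ih2 := ih m (by omega)
      rw [← sum_rec m (z^2-1/z^2), ← ih1, ← ih2]
      have hp : (z+1/z)^8 = (2*(z^2-1/z^2)^2+16)*(z+1/z)^4 - (z^2-1/z^2)^4 := by
        field_simp
        ring
      have hm : (z-1/z)^8 = (2*(z^2-1/z^2)^2+16)*(z-1/z)^4 - (z^2-1/z^2)^4 := by
        field_simp
        ring
      linear_combination ((1/2)*(z+1/z)^(4*m+2)) * hp - ((1/2)*(z-1/z)^(4*m+2)) * hm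

theorem stmt_4 (M : ℕ) (hM : 1 ≤ M) (z : ℂ) (hz : z ≠ 0) :
    (1 / 2) * (z + 1 / z) ^ (4 * M + 2) - (1 / 2) * (z - 1 / z) ^ (4 * M + 2)
    = ∑ k ∈ Finset.range (M + 1),
        2 ^ (4 * k) * ((4 * M + 2 : ℂ) / (2 * k + 1)) * ((M + k).choose (2 * k)) *
          (z ^ 2 - 1 / z ^ 2) ^ (2 * (M - k)) := by
  rw [aux_pow_identity M z hz]
  refine Finset.sum_congr rfl fun k hk => ?_
  have hkM : k ≤ M := by
    simpa [Nat.lt_succ_iff] using hk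
  have h2k : (2*(k:ℂ)+1) ≠ 0 := by
    have h : ((2*k+1 : ℕ) : ℂ) ≠ 0 := Nat.cast_ne_zero.mpr (by omega)
    push_cast at h
    exact h
  have c1 : ((M:ℂ)+(k:ℂ)+1) * ((M+k).choose (2*k) : ℂ)
      = ((M+k+1).choose (2*k+1) : ℂ) * (2*(k:ℂ)+1) := by
    have h := Nat.add_one_mul_choose_eq (M+k) (2*k)
    have h' := congrArg (Nat.cast : ℕ → ℂ) h
    push_cast at h'
    linear_combination h'
  have c2 : ((M+k).choose (2*k+1) : ℂ) * (2*(k:ℂ)+1)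
      = ((M+k).choose (2*k) : ℂ) * ((M:ℂ) - (k:ℂ)) := by
    have h := Nat.choose_succ_right_eq (M+k) (2*k)
    have h2 : (M+k).choose (2*k+1) * (2*k+1) = (M+k).choose (2*k) * (M-k) := by
      rw [h]; congr 1; omega
    have h' := congrArg (Nat.cast : ℕ → ℂ) h2
    push_cast [Nat.cast_sub hkM] at h'
    linear_combination h'
  have h16 : (2:ℂ)^(4*k) = 16^k := by
    rw [pow_mul]; norm_num
  rw [h16]
  have hcoef : 2*(16:ℂ)^k*((uu M k : ℂ))
      = 16^k*((4*(M:ℂ)+2)/(2*(k:ℂ)+1))*((M+k).choose (2*k) : ℂ) := by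
    simp only [uu, Nat.cast_add]
    field_simp
    linear_combination (-2)*c1 + 2*c2
  linear_combination ((z^2-1/z^2)^(2*(M-k))) * hcoef
end

section
/- For every natural number M ≥ 1 and every nonzero complex number z, (1/2)(z + 1/z)^{4M} + (1/2)(z − 1/z)^{4M} = ∑_{k=0}^{M} 2^{4k} (M/(M+k)) C(M+k, 2k) (z² − 1/z²)^{2(M−k)}. -/
def lucasE (n k : ℕ) : ℕ :=
  if 2 * k ≤ n then (n - k).choose k + (if k = 0 then 0 else (n - k - 1).choose (k - 1)) else 0

lemma lucasE_pascal (n j : ℕ) :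
    lucasE (n + 3) j = lucasE (n + 2) j + (if j = 0 then 0 else lucasE (n + 1) (j - 1)) := by
  rcases j with _ | i
  · simp [lucasE]
  · simp only [Nat.succ_ne_zero, if_false, Nat.add_sub_cancel]
    unfold lucasE
    by_cases h1 : 2 * (i + 1) ≤ n + 3
    · by_cases h2 : 2 * (i + 1) ≤ n + 2
      · have h3 : 2 * i ≤ n + 1 := by omega
        rw [if_pos h1, if_pos h2, if_pos h3]
        simp only [Nat.succ_ne_zero, if_false, Nat.add_sub_cancel]
        obtain ⟨a, rfl⟩ : ∃ a, n = i + i + a := ⟨n - 2 * i, by omega⟩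
        have e1 : i + i + a + 3 - (i + 1) = (i + a + 1) + 1 := by omega
        have e2 : i + i + a + 3 - (i + 1) - 1 = i + a + 1 := by omega
        have e3 : i + i + a + 2 - (i + 1) = i + a + 1 := by omega
        have e4 : i + i + a + 2 - (i + 1) - 1 = i + a := by omega
        have e5 : i + i + a + 1 - i = (i + a) + 1 := by omega
        have e6 : i + i + a + 1 - i - 1 = i + a := by omega
        rw [e2, e1, e4, e3, e6, e5]
        rcases i with _ | j
        · simp [Nat.choose_one_right]
        · simp only [Nat.succ_ne_zero, if_false, Nat.add_sub_cancel]
          have p1 : (j + 1 + a + 1 + 1).choose (j + 1 + 1)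
              = (j + 1 + a + 1).choose (j + 1) + (j + 1 + a + 1).choose (j + 1 + 1) :=
            Nat.choose_succ_succ _ _
          have p2 : (j + 1 + a + 1).choose (j + 1)
              = (j + 1 + a).choose j + (j + 1 + a).choose (j + 1) := by
            have : j + 1 + a + 1 = (j + a) + 1 + 1 := by omega
            rw [this]
            have : j + 1 + a = j + a + 1 := by omega
            rw [this]
            exact Nat.choose_succ_succ _ _
          rw [p1, p2]
          ring
      · -- 2*(i+1) = n+3, n odd, i ≥ 1
        have hn : n + 3 = 2 * (i + 1) := by omega
        have hi : 1 ≤ i := by omega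
        have h3 : 2 * i ≤ n + 1 := by omega
        rw [if_pos h1, if_neg h2, if_pos h3]
        simp only [Nat.succ_ne_zero, if_false, Nat.add_sub_cancel]
        have e1 : n + 3 - (i + 1) = i + 1 := by omega
        have e2 : n + 3 - (i + 1) - 1 = i := by omega
        have e5 : n + 1 - i = i := by omega
        have e6 : n + 1 - i - 1 = i - 1 := by omega
        rw [e2, e1, e6, e5]
        rcases i with _ | j
        · omega
        · simp [Nat.choose_self]
    · have h2 : ¬ 2 * (i + 1) ≤ n + 2 := by omega
      have h3 : ¬ 2 * i ≤ n + 1 := by omega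
      rw [if_neg h1, if_neg h2, if_neg h3]

lemma lucasE_eq_zero {n k : ℕ} (h : ¬ 2 * k ≤ n) : lucasE n k = 0 := by
  simp [lucasE, h]

noncomputable def lucasS (x y : ℂ) (n : ℕ) : ℂ :=
  ∑ k ∈ Finset.range (n + 1),
    (-1 : ℂ) ^ k * (lucasE n k : ℂ) * (x * y) ^ k * (x + y) ^ (n - 2 * k)

lemma lucasS_rec (x y : ℂ) (n : ℕ) :
    lucasS x y (n + 3) = (x + y) * lucasS x y (n + 2) - (x * y) * lucasS x y (n + 1) := by
  have h1 : (x + y) * lucasS x y (n + 2)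
      = ∑ k ∈ Finset.range (n + 3),
          (-1 : ℂ) ^ k * (lucasE (n + 2) k : ℂ) * (x * y) ^ k * (x + y) ^ (n + 3 - 2 * k) := by
    rw [lucasS, Finset.mul_sum]
    refine Finset.sum_congr rfl fun k hk => ?_
    by_cases h : 2 * k ≤ n + 2
    · rw [show n + 3 - 2 * k = (n + 2 - 2 * k) + 1 from by omega, pow_succ]
      ring
    · rw [lucasE_eq_zero h]
      push_cast; ring
  have h2 : (x * y) * lucasS x y (n + 1)
      = ∑ k ∈ Finset.range (n + 2),
          (-1 : ℂ) ^ k * (lucasE (n + 1) k : ℂ) * (x * y) ^ (k + 1) * (x + y) ^ (n + 1 - 2 * k) := by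
    rw [lucasS, Finset.mul_sum]
    refine Finset.sum_congr rfl fun k hk => ?_
    rw [pow_succ]; ring
  rw [h1, h2]
  have key : lucasS x y (n + 3)
      = (∑ k ∈ Finset.range (n + 4),
          (-1 : ℂ) ^ k * (lucasE (n + 2) k : ℂ) * (x * y) ^ k * (x + y) ^ (n + 3 - 2 * k))
        + ∑ k ∈ Finset.range (n + 4),
          (-1 : ℂ) ^ k * ((if k = 0 then 0 else lucasE (n + 1) (k - 1) : ℕ) : ℂ) * (x * y) ^ k
            * (x + y) ^ (n + 3 - 2 * k) := by
    rw [lucasS, ← Finset.sum_add_distrib]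
    refine Finset.sum_congr rfl fun k hk => ?_
    rw [lucasE_pascal n k]
    push_cast
    ring
  rw [key]
  -- first sum: drop last term
  have d1 : (∑ k ∈ Finset.range (n + 4),
      (-1 : ℂ) ^ k * (lucasE (n + 2) k : ℂ) * (x * y) ^ k * (x + y) ^ (n + 3 - 2 * k))
      = ∑ k ∈ Finset.range (n + 3),
          (-1 : ℂ) ^ k * (lucasE (n + 2) k : ℂ) * (x * y) ^ k * (x + y) ^ (n + 3 - 2 * k) := by
    rw [Finset.sum_range_succ, lucasE_eq_zero (show ¬ 2 * (n + 3) ≤ n + 2 from by omega)]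
    simp
  have e1 : ∑ k ∈ Finset.range (n + 2),
        (-1 : ℂ) ^ k * (lucasE (n + 1) k : ℂ) * (x * y) ^ (k + 1) * (x + y) ^ (n + 1 - 2 * k)
      = ∑ k ∈ Finset.range (n + 3),
        (-1 : ℂ) ^ k * (lucasE (n + 1) k : ℂ) * (x * y) ^ (k + 1) * (x + y) ^ (n + 1 - 2 * k) := by
    rw [Finset.sum_range_succ (n := n + 2), lucasE_eq_zero (show ¬ 2 * (n + 2) ≤ n + 1 from by omega)]
    simp
  have d2 : (∑ k ∈ Finset.range (n + 4),
      (-1 : ℂ) ^ k * ((if k = 0 then 0 else lucasE (n + 1) (k - 1) : ℕ) : ℂ) * (x * y) ^ k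
        * (x + y) ^ (n + 3 - 2 * k))
      = - ∑ k ∈ Finset.range (n + 3),
          (-1 : ℂ) ^ k * (lucasE (n + 1) k : ℂ) * (x * y) ^ (k + 1) * (x + y) ^ (n + 1 - 2 * k) := by
    rw [Finset.sum_range_succ']
    rw [← Finset.sum_neg_distrib]
    have hlast : ((-1 : ℂ)) ^ 0 * ((if (0:ℕ) = 0 then 0 else lucasE (n + 1) (0 - 1) : ℕ) : ℂ)
        * (x * y) ^ 0 * (x + y) ^ (n + 3 - 2 * 0) = 0 := by simp
    rw [hlast, add_zero]
    refine Finset.sum_congr rfl fun k hk => ?_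
    simp only [Nat.succ_ne_zero, if_false, Nat.add_sub_cancel]
    by_cases h : 2 * k ≤ n + 1
    · rw [show n + 3 - 2 * (k + 1) = n + 1 - 2 * k from by omega, pow_succ]
      ring
    · rw [lucasE_eq_zero h]
      push_cast; ring
  rw [d1, e1, d2]
  ring

lemma lucas_sum (x y : ℂ) (n : ℕ) (hn : 1 ≤ n) :
    x ^ n + y ^ n = lucasS x y n := by
  have key : ∀ m : ℕ, (x ^ (m + 1) + y ^ (m + 1) = lucasS x y (m + 1))
      ∧ (x ^ (m + 2) + y ^ (m + 2) = lucasS x y (m + 2)) := by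
    intro m
    induction m with
    | zero =>
      constructor
      · show x ^ 1 + y ^ 1 = lucasS x y 1
        rw [lucasS]
        rw [Finset.sum_range_succ, Finset.sum_range_succ, Finset.sum_range_zero]
        simp [lucasE]
      · show x ^ 2 + y ^ 2 = lucasS x y 2
        rw [lucasS]
        rw [Finset.sum_range_succ, Finset.sum_range_succ, Finset.sum_range_succ,
          Finset.sum_range_zero]
        simp only [lucasE]
        norm_num
        ring
    | succ m ih =>
      refine ⟨ih.2, ?_⟩
      have hr := lucasS_rec x y m
      rw [← ih.1, ← ih.2] at hr
      rw [show m + 1 + 2 = m + 3 from rfl, hr]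
      ring
  obtain ⟨m, rfl⟩ : ∃ m, n = m + 1 := ⟨n - 1, by omega⟩
  exact (key m).1

lemma lucasE_coeff (M k : ℕ) (hM : 1 ≤ M) (hk : k ≤ M) :
    lucasE (2 * M) k * (2 * M - k) = 2 * M * (2 * M - k).choose (2 * (M - k)) := by
  have hsym : (2 * M - k).choose (2 * (M - k)) = (2 * M - k).choose k := by
    rw [show 2 * (M - k) = (2 * M - k) - k from by omega]
    exact Nat.choose_symm (by omega)
  rw [hsym]
  unfold lucasE
  rw [if_pos (by omega : 2 * k ≤ 2 * M)]
  rcases k with _ | j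
  · simp
  · simp only [Nat.succ_ne_zero, if_false, Nat.add_sub_cancel]
    obtain ⟨m, hm1, hm2⟩ : ∃ m, 2 * M - (j + 1) = m + 1 ∧ 2 * M = m + 1 + (j + 1) := ⟨2 * M - j - 2, by omega, by omega⟩
    rw [hm1, hm2, show m + 1 - 1 = m from rfl]
    have h : (m + 1) * m.choose j = (m + 1).choose (j + 1) * (j + 1) := Nat.add_one_mul_choose_eq m j
    calc ((m + 1).choose (j + 1) + m.choose j) * (m + 1)
        = (m + 1).choose (j + 1) * (m + 1) + (m + 1) * m.choose j := by ring
      _ = (m + 1).choose (j + 1) * (m + 1) + (m + 1).choose (j + 1) * (j + 1) := by rw [h]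
      _ = (m + 1 + (j + 1)) * (m + 1).choose (j + 1) := by ring

theorem stmt_5 (M : ℕ) (hM : 1 ≤ M) (z : ℂ) (hz : z ≠ 0) :
    (1 / 2) * (z + 1 / z) ^ (4 * M) + (1 / 2) * (z - 1 / z) ^ (4 * M)
    = ∑ k ∈ Finset.range (M + 1),
        2 ^ (4 * k) * ((M : ℂ) / (M + k)) * ((M + k).choose (2 * k)) *
          (z ^ 2 - 1 / z ^ 2) ^ (2 * (M - k)) := by
  have h4 : (z + 1 / z) ^ 2 + (-((z - 1 / z) ^ 2)) = 4 := by
    field_simp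
    ring
  have hq : (z + 1 / z) ^ 2 * (-((z - 1 / z) ^ 2)) = -((z ^ 2 - 1 / z ^ 2) ^ 2) := by
    field_simp
    ring
  have key := lucas_sum ((z + 1 / z) ^ 2) (-((z - 1 / z) ^ 2)) (2 * M) (by omega)
  rw [lucasS, h4, hq] at key
  have hL1 : (z + 1 / z) ^ (4 * M) = ((z + 1 / z) ^ 2) ^ (2 * M) := by
    rw [← pow_mul]
    norm_num
    ring_nf
  have hL2 : (z - 1 / z) ^ (4 * M) = (-((z - 1 / z) ^ 2)) ^ (2 * M) := by
    rw [Even.neg_pow ⟨M, by ring⟩, ← pow_mul]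
    norm_num
    ring_nf
  rw [hL1, hL2, show (1 / 2 : ℂ) * ((z + 1 / z) ^ 2) ^ (2 * M)
      + 1 / 2 * (-((z - 1 / z) ^ 2)) ^ (2 * M)
      = 1 / 2 * (((z + 1 / z) ^ 2) ^ (2 * M) + (-((z - 1 / z) ^ 2)) ^ (2 * M)) from by ring,
    key]
  have trunc : (∑ k ∈ Finset.range (2 * M + 1),
        (-1 : ℂ) ^ k * (lucasE (2 * M) k : ℂ) * (-((z ^ 2 - 1 / z ^ 2) ^ 2)) ^ k
          * (4 : ℂ) ^ (2 * M - 2 * k))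
      = ∑ k ∈ Finset.range (M + 1),
        (-1 : ℂ) ^ k * (lucasE (2 * M) k : ℂ) * (-((z ^ 2 - 1 / z ^ 2) ^ 2)) ^ k
          * (4 : ℂ) ^ (2 * M - 2 * k) := by
    refine (Finset.sum_subset (Finset.range_subset_range.2 (by omega)) fun k hk hk' => ?_).symm
    have : ¬ 2 * k ≤ 2 * M := by
      simp only [Finset.mem_range] at hk hk'
      omega
    rw [lucasE_eq_zero this]
    simp
  rw [trunc, ← Finset.sum_range_reflect]
  rw [Finset.mul_sum]
  refine Finset.sum_congr rfl fun k hk => ?_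
  simp only [Finset.mem_range] at hk
  have hkM : k ≤ M := by omega
  rw [show M + 1 - 1 - k = M - k from by omega]
  have hj := lucasE_coeff M (M - k) hM (by omega)
  rw [show 2 * M - (M - k) = M + k from by omega,
    show M - (M - k) = k from by omega] at hj
  have hne : ((M : ℂ) + (k : ℂ)) ≠ 0 := by
    have : ((M + k : ℕ) : ℂ) ≠ 0 := by rw [Nat.cast_ne_zero]; omega
    push_cast at this
    exact this
  have hE : (lucasE (2 * M) (M - k) : ℂ)
      = 2 * M * ((M + k).choose (2 * k) : ℂ) / ((M : ℂ) + k) := by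
    rw [eq_div_iff hne]
    have := congrArg (Nat.cast : ℕ → ℂ) hj
    push_cast at this
    linear_combination this
  have hpow4 : (4 : ℂ) ^ (2 * M - 2 * (M - k)) = 2 ^ (4 * k) := by
    rw [show (4 : ℂ) = 2 ^ 2 from by norm_num, ← pow_mul,
      show 2 * (2 * M - 2 * (M - k)) = 4 * k from by omega]
  have hsign : (-1 : ℂ) ^ (M - k) * (-((z ^ 2 - 1 / z ^ 2) ^ 2)) ^ (M - k)
      = (z ^ 2 - 1 / z ^ 2) ^ (2 * (M - k)) := by
    rw [show (-((z ^ 2 - 1 / z ^ 2) ^ 2)) = (-1) * (z ^ 2 - 1 / z ^ 2) ^ 2 from by ring,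
      mul_pow, ← mul_assoc, ← mul_pow]
    norm_num
    rw [← pow_mul, mul_comm 2 (M - k)]
  rw [hE, hpow4, ← hsign]
  field_simp
end

section
/- For every natural number M ≥ 1 and every nonzero complex number z, (1/2)(z + 1/z)^{4M+2} + (1/2)(z − 1/z)^{4M+2} = (z² + 1/z²) ∑_{k=0}^{M} 2^{4k} C(M+k, 2k) (z² − 1/z²)^{2(M−k)}. -/
open Finset

lemma pascal2 (n r : ℕ) :
    (n+2).choose (r+2) + n.choose (r+2) = n.choose r + 2 * (n+1).choose (r+2) := by
  have h1 : (n+2).choose (r+2) = (n+1).choose (r+1) + (n+1).choose (r+2) :=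
    Nat.choose_succ_succ _ _
  have h2 : (n+1).choose (r+2) = n.choose (r+1) + n.choose (r+2) :=
    Nat.choose_succ_succ _ _
  have h3 : (n+1).choose (r+1) = n.choose r + n.choose (r+1) :=
    Nat.choose_succ_succ _ _
  omega

lemma sumrec (d p : ℂ) (m : ℕ) :
    ∑ k ∈ range (m+2+1), ((m+2+k).choose (2*k) : ℂ) * d^(2*k) * p^(m+2-k)
    = (d^2 + 2*p) * (∑ k ∈ range (m+1+1), ((m+1+k).choose (2*k) : ℂ) * d^(2*k) * p^(m+1-k))
      - p^2 * (∑ k ∈ range (m+1), ((m+k).choose (2*k) : ℂ) * d^(2*k) * p^(m-k)) := by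
  set w : ℕ → ℂ := fun k =>
    (2*((m+1+k).choose (2*k) : ℂ) - ((m+k).choose (2*k) : ℂ)) * d^(2*k) * p^(m+2-k) with hw
  -- extend the last sum to range (m+2)
  have h0 : ∑ k ∈ range (m+2), ((m+k).choose (2*k) : ℂ) * d^(2*k) * p^(m-k)
      = ∑ k ∈ range (m+1), ((m+k).choose (2*k) : ℂ) * d^(2*k) * p^(m-k) := by
    rw [Finset.sum_range_succ]
    have hz0 : (m+(m+1)).choose (2*(m+1)) = 0 := Nat.choose_eq_zero_of_lt (by omega)
    rw [hz0]
    push_cast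
    ring
  rw [← h0, Finset.mul_sum, Finset.mul_sum, ← Finset.sum_sub_distrib]
  -- RHS termwise = d^2 * f1 k + w k
  have hC1 : ∀ k ∈ range (m+2),
      (d^2 + 2*p) * (((m+1+k).choose (2*k) : ℂ) * d^(2*k) * p^(m+1-k))
        - p^2 * (((m+k).choose (2*k) : ℂ) * d^(2*k) * p^(m-k))
      = d^2 * (((m+1+k).choose (2*k) : ℂ) * d^(2*k) * p^(m+1-k)) + w k := by
    intro k hk
    simp only [Finset.mem_range] at hk
    rcases Nat.lt_or_ge k (m+1) with h | h
    · have e1 : m+2-k = (m-k) + 2 := by omega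
      have e2 : m+1-k = (m-k) + 1 := by omega
      rw [hw]
      simp only
      rw [e1, e2]
      ring
    · have hk' : k = m+1 := by omega
      subst hk'
      rw [hw]
      simp only
      rw [Nat.choose_eq_zero_of_lt (show m+(m+1) < 2*(m+1) by omega)]
      have e1 : m+2-(m+1) = 1 := by omega
      have e2 : m+1-(m+1) = 0 := by omega
      rw [e1, e2]
      push_cast
      ring
  rw [Finset.sum_congr rfl hC1, Finset.sum_add_distrib]
  -- now deal with the w-sum: ∑_{k<m+2} w k = ∑_{k<m+2} w (k+1) + w 0
  have hW : ∑ k ∈ range (m+2), w k = (∑ k ∈ range (m+2), w (k+1)) + w 0 := by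
    have h1 : ∑ k ∈ range (m+3), w k = (∑ k ∈ range (m+2), w (k+1)) + w 0 :=
      Finset.sum_range_succ' _ _
    have h2 : ∑ k ∈ range (m+3), w k = (∑ k ∈ range (m+2), w k) + w (m+2) :=
      Finset.sum_range_succ _ _
    have h3 : w (m+2) = 0 := by
      rw [hw]
      simp only
      rw [Nat.choose_eq_zero_of_lt (show m+1+(m+2) < 2*(m+2) by omega),
        Nat.choose_eq_zero_of_lt (show m+(m+2) < 2*(m+2) by omega)]
      push_cast; ring
    rw [h3] at h2
    rw [← h1, h2]; ring
  rw [hW]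
  -- LHS: split off k = 0
  rw [Finset.sum_range_succ' (fun k => ((m+2+k).choose (2*k) : ℂ) * d^(2*k) * p^(m+2-k)) (m+2)]
  -- f2 0 = w 0
  have hzero : ((m+2+0).choose (2*0) : ℂ) * d^(2*0) * p^(m+2-0) = w 0 := by
    rw [hw]; simp; ring
  rw [hzero]
  -- termwise: f2 (k+1) = d^2 * f1 k + w (k+1)
  have hC3 : ∀ k ∈ range (m+2),
      ((m+2+(k+1)).choose (2*(k+1)) : ℂ) * d^(2*(k+1)) * p^(m+2-(k+1))
      = d^2 * (((m+1+k).choose (2*k) : ℂ) * d^(2*k) * p^(m+1-k)) + w (k+1) := by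
    intro k hk
    simp only [Finset.mem_range] at hk
    rw [hw]
    simp only
    have e1 : m+2-(k+1) = m+1-k := by omega
    have e2 : m+2+(k+1) = (m+1+k)+2 := by omega
    have e3 : 2*(k+1) = 2*k+2 := by omega
    have e4 : m+1+(k+1) = (m+1+k)+1 := by omega
    have e6 : m+(k+1) = m+1+k := by omega
    rw [e1, e2, e3, e4, e6]
    have hp := pascal2 (m+1+k) (2*k)
    have hpc : (((m+1+k)+2).choose (2*k+2) : ℂ) + ((m+1+k).choose (2*k+2) : ℂ)
        = ((m+1+k).choose (2*k) : ℂ) + 2 * (((m+1+k)+1).choose (2*k+2) : ℂ) := by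
      exact_mod_cast hp
    have e5 : d^(2*k+2) = d^2 * d^(2*k) := by ring
    rw [e5]
    linear_combination (d^2 * d^(2*k) * p^(m+1-k)) * hpc
  rw [Finset.sum_congr rfl hC3, Finset.sum_add_distrib]
  ring

lemma key_s6 : ∀ M : ℕ, ∀ x y : ℂ,
    x^(2*M+1) + y^(2*M+1)
    = (x + y) * ∑ k ∈ range (M+1), ((M+k).choose (2*k) : ℂ) * (x-y)^(2*k) * (x*y)^(M-k) := by
  intro M
  induction M using Nat.strong_induction_on with
  | _ M ih =>
    match M with
    | 0 =>
      intro x y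
      simp [Finset.sum_range_one]
    | 1 =>
      intro x y
      rw [Finset.sum_range_succ, Finset.sum_range_one]
      norm_num
      ring
    | (m+2) =>
      intro x y
      have h1 := ih m (by omega) x y
      have h2 := ih (m+1) (by omega) x y
      have e1 : x^(2*(m+2)+1) + y^(2*(m+2)+1)
          = (x^2+y^2)*(x^(2*(m+1)+1)+y^(2*(m+1)+1)) - x^2*y^2*(x^(2*m+1)+y^(2*m+1)) := by
        ring
      rw [e1, h1, h2]
      have hs := sumrec (x - y) (x*y) m
      calc (x^2+y^2) * ((x+y) * ∑ k ∈ range (m+1+1), ((m+1+k).choose (2*k) : ℂ) * (x-y)^(2*k) * (x*y)^(m+1-k))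
            - x^2*y^2 * ((x+y) * ∑ k ∈ range (m+1), ((m+k).choose (2*k) : ℂ) * (x-y)^(2*k) * (x*y)^(m-k))
          = (x+y) * (((x-y)^2 + 2*(x*y)) * (∑ k ∈ range (m+1+1), ((m+1+k).choose (2*k) : ℂ) * (x-y)^(2*k) * (x*y)^(m+1-k))
              - (x*y)^2 * (∑ k ∈ range (m+1), ((m+k).choose (2*k) : ℂ) * (x-y)^(2*k) * (x*y)^(m-k))) := by ring
        _ = (x+y) * ∑ k ∈ range (m+2+1), ((m+2+k).choose (2*k) : ℂ) * (x-y)^(2*k) * (x*y)^(m+2-k) := by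
              rw [hs]

theorem stmt_6 (M : ℕ) (hM : 1 ≤ M) (z : ℂ) (hz : z ≠ 0) :
    (1 / 2) * (z + 1 / z) ^ (4 * M + 2) + (1 / 2) * (z - 1 / z) ^ (4 * M + 2)
    = (z ^ 2 + 1 / z ^ 2) * ∑ k ∈ Finset.range (M + 1),
        2 ^ (4 * k) * ((M + k).choose (2 * k)) *
          (z ^ 2 - 1 / z ^ 2) ^ (2 * (M - k)) := by
  have hd : ((z+1/z)^2 - (z-1/z)^2 : ℂ) = 4 := by field_simp; ring
  have hp : ((z+1/z)^2 * (z-1/z)^2 : ℂ) = (z^2 - 1/z^2)^2 := by field_simp; ring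
  have hS : ((z+1/z)^2 + (z-1/z)^2 : ℂ) = 2*(z^2 + 1/z^2) := by field_simp; ring
  have hkey := key_s6 M ((z+1/z)^2) ((z-1/z)^2)
  rw [hd, hp] at hkey
  have hsum : ∑ k ∈ Finset.range (M+1), ((M+k).choose (2*k) : ℂ) * (4:ℂ)^(2*k) * ((z^2 - 1/z^2)^2)^(M-k)
      = ∑ k ∈ Finset.range (M+1), 2^(4*k) * ((M+k).choose (2*k) : ℂ) * (z^2 - 1/z^2)^(2*(M-k)) := by
    refine Finset.sum_congr rfl fun k _ => ?_
    rw [← pow_mul]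
    have h4k : (4:ℂ)^(2*k) = 2^(4*k) := by
      rw [show (4:ℂ) = 2^2 by norm_num, ← pow_mul, show 2*(2*k) = 4*k by ring]
    rw [h4k]; ring
  rw [hsum] at hkey
  have h4 : 4*M+2 = 2*(2*M+1) := by ring
  rw [h4, pow_mul, pow_mul]
  rw [show (1/2 : ℂ)*((z+1/z)^2)^(2*M+1) + (1/2 : ℂ)*((z-1/z)^2)^(2*M+1)
      = (1/2) * (((z+1/z)^2)^(2*M+1) + ((z-1/z)^2)^(2*M+1)) from by ring]
  rw [hkey, hS]
  ring
end

section
/- For every natural number M ≥ 1 and every complex number x with sinh(x) ≠ 0 and cosh(x) ≠ 0, one has cosh(x)/sinh(x)^{4M−1} = −sinh(x)/cosh(x)^{4M−1} + ∑_{k=0}^{M} 2^{2(M+k)} (M/(M+k)) C(M+k, 2k) · 1/sinh(2x)^{2(M+k)−1}. -/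
def cc (n j : ℕ) : ℕ :=
  if j = 0 then 1 else if n < 2*j then 0 else (n-j).choose j + (n-j-1).choose (j-1)

lemma cc_zero (n : ℕ) : cc n 0 = 1 := rfl

lemma cc_eq_zero {n j : ℕ} (h1 : 1 ≤ j) (h2 : n < 2*j) : cc n j = 0 := by
  unfold cc
  rw [if_neg (by omega), if_pos h2]

lemma cc_one (n : ℕ) (h : 1 ≤ n) : cc (n+1) 1 = n+1 := by
  unfold cc
  rw [if_neg (by omega), if_neg (by omega)]
  simp [Nat.choose_one_right]

lemma cc_diag (m : ℕ) : cc (2*(m+1)) (m+1) = 2 := by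
  unfold cc
  rw [if_neg (by omega), if_neg (by omega)]
  have h2 : 2*(m+1) - (m+1) - 1 = m := by omega
  have h1 : 2*(m+1) - (m+1) = m+1 := by omega
  rw [h2, h1, show m+1-1 = m from by omega, Nat.choose_self, Nat.choose_self]

lemma cc_rec (n j : ℕ) : cc (n+3) (j+1) = cc (n+2) (j+1) + cc (n+1) j := by
  rcases j with _ | i
  · rw [cc_zero, cc_one _ (by omega), cc_one _ (by omega)]
  · rcases le_or_gt (2*(i+2)) (n+2) with hle | hlt
    · obtain ⟨d, hd⟩ : ∃ d, n + 2 = 2*(i+2) + d := ⟨n+2-2*(i+2), by omega⟩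
      unfold cc
      rw [if_neg (by omega), if_neg (by omega), if_neg (by omega), if_neg (by omega),
        if_neg (by omega), if_neg (by omega)]
      have e2 : n+3-(i+1+1)-1 = i+1+d+1 := by omega
      have e1 : n+3-(i+1+1) = i+1+d+1+1 := by omega
      have e4 : n+2-(i+1+1)-1 = i+1+d := by omega
      have e3 : n+2-(i+1+1) = i+1+d+1 := by omega
      have e6 : n+1-(i+1)-1 = i+1+d := by omega
      have e5 : n+1-(i+1) = i+1+d+1 := by omega
      have e7 : i+1+1-1 = i+1 := by omega
      have e8 : i+1-1 = i := by omega
      rw [e2, e1, e4, e3, e6, e5, e7, e8]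
      have p1 := Nat.choose_succ_succ (i+1+d+1) (i+1)
      have p2 := Nat.choose_succ_succ (i+1+d) i
      simp only [Nat.succ_eq_add_one] at p1 p2
      omega
    · rcases eq_or_lt_of_le (by omega : n + 3 ≤ 2*(i+2)) with heq | hlt2
      · rw [show cc (n+2) (i+1+1) = 0 from cc_eq_zero (by omega) (by omega),
          show n+3 = 2*(i+1+1) from by omega, cc_diag (i+1),
          show n+1 = 2*(i+1) from by omega, cc_diag i]
      · rw [show cc (n+3) (i+1+1) = 0 from cc_eq_zero (by omega) (by omega),
          show cc (n+2) (i+1+1) = 0 from cc_eq_zero (by omega) (by omega),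
          show cc (n+1) (i+1) = 0 from cc_eq_zero (by omega) (by omega)]

lemma cc_mul (M k : ℕ) (hM : 1 ≤ M) (hk : k ≤ M) :
    (M+k) * cc (2*M) (M-k) = 2*M * (M+k).choose (2*k) := by
  rcases eq_or_lt_of_le hk with heq | hlt
  · subst heq
    rw [Nat.sub_self, cc_zero, show k+k = 2*k from by ring, Nat.choose_self]
  · obtain ⟨i, hi⟩ : ∃ i, M = k + i + 1 := ⟨M - k - 1, by omega⟩
    subst hi
    have e0 : k + i + 1 - k = i + 1 := by omega
    rw [e0]
    unfold cc
    rw [if_neg (by omega), if_neg (by omega)]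
    have e2 : 2*(k+i+1) - (i+1) - 1 = 2*k+i := by omega
    have e1 : 2*(k+i+1) - (i+1) = 2*k+i+1 := by omega
    have e3 : i + 1 - 1 = i := by omega
    rw [e2, e1, e3]
    have p1 := Nat.add_one_mul_choose_eq (2*k+i) i
    have p2 : (k+i+1+k) = 2*k+i+1 := by omega
    rw [p2]
    have p3 : Nat.choose (2*k+i+1) (2*k) = Nat.choose (2*k+i+1) (i+1) := by
      have h := Nat.choose_symm (n := 2*k+i+1) (k := 2*k) (by omega)
      have e4 : 2*k+i+1 - 2*k = i+1 := by omega
      rw [e4] at h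
      exact h.symm
    rw [p3, Nat.mul_add, p1]
    ring

lemma sum_rec_s8 (X : ℂ) (n : ℕ) :
    ∑ j ∈ Finset.range (n+4), (cc (n+3) j : ℂ) * X^j
    = ∑ j ∈ Finset.range (n+3), (cc (n+2) j : ℂ) * X^j
      + X * ∑ j ∈ Finset.range (n+2), (cc (n+1) j : ℂ) * X^j := by
  rw [Finset.sum_range_succ' (fun j => (cc (n+3) j : ℂ) * X^j) (n+3),
    Finset.sum_range_succ' (fun j => (cc (n+2) j : ℂ) * X^j) (n+2), Finset.mul_sum]
  have hL : ∀ j, (cc (n+3) (j+1) : ℂ) * X^(j+1)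
      = (cc (n+2) (j+1) : ℂ) * X^(j+1) + X * ((cc (n+1) j : ℂ) * X^j) := by
    intro j
    rw [cc_rec]
    push_cast
    ring
  rw [Finset.sum_congr rfl (fun j _ => hL j), Finset.sum_add_distrib,
    Finset.sum_range_succ (fun j => (cc (n+2) (j+1):ℂ) * X^(j+1)) (n+2),
    Finset.sum_range_succ (fun j => X * ((cc (n+1) j:ℂ) * X^j)) (n+2),
    show cc (n+2) (n+2+1) = 0 from cc_eq_zero (by omega) (by omega),
    show cc (n+1) (n+2) = 0 from cc_eq_zero (by omega) (by omega)]
  push_cast [cc_zero]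
  ring

lemma key_s8 (a b : ℂ) (hab : a + b = 1) (n : ℕ) :
    a^(n+1) + b^(n+1) = ∑ j ∈ Finset.range (n+2), (cc (n+1) j : ℂ) * (-(a*b))^j := by
  induction n using Nat.strong_induction_on with
  | _ n ih =>
    match n with
    | 0 =>
      rw [Finset.sum_range_succ, Finset.sum_range_succ, Finset.sum_range_zero,
        show cc 1 1 = 0 from cc_eq_zero (by omega) (by omega), cc_zero]
      simpa using hab
    | 1 =>
      rw [Finset.sum_range_succ, Finset.sum_range_succ, Finset.sum_range_succ,
        Finset.sum_range_zero,
        show cc (1+1) 2 = 0 from cc_eq_zero (by omega) (by omega),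
        show cc (1+1) 1 = 2 from cc_one 1 (by omega), cc_zero]
      push_cast
      linear_combination (a + b + 1) * hab
    | (m+2) =>
      have h1 := ih m (by omega)
      have h2 := ih (m+1) (by omega)
      have h3 : a^(m+3) + b^(m+3)
          = (a^(m+2) + b^(m+2)) + (-(a*b)) * (a^(m+1) + b^(m+1)) := by
        linear_combination (a^(m+2) + b^(m+2)) * hab
      have h1' : a^(m+1) + b^(m+1)
          = ∑ j ∈ Finset.range (m+2), (cc (m+1) j : ℂ) * (-(a*b))^j := h1
      have h2' : a^(m+2) + b^(m+2)
          = ∑ j ∈ Finset.range (m+3), (cc (m+2) j : ℂ) * (-(a*b))^j := h2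
      show a^(m+3) + b^(m+3) = ∑ j ∈ Finset.range (m+4), (cc (m+3) j : ℂ) * (-(a*b))^j
      rw [h3, h1', h2']
      exact (sum_rec_s8 (-(a*b)) m).symm

lemma key2 (M : ℕ) (hM : 1 ≤ M) (s c : ℂ) (h : c^2 - s^2 = 1) :
    c^(4*M) + s^(4*M)
    = ∑ k ∈ Finset.range (M+1), (cc (2*M) (M-k) : ℂ) * ((s*c)^2)^(M-k) := by
  obtain ⟨n, hn⟩ : ∃ n, 2*M = n+1 := ⟨2*M-1, by omega⟩
  have hab : c^2 + (-s^2) = 1 := by linear_combination h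
  have K := key_s8 (c^2) (-s^2) hab n
  have l1 : (c^2)^(n+1) = c^(4*M) := by rw [← pow_mul]; congr 1; omega
  have l2 : (-s^2)^(n+1) = s^(4*M) := by
    rw [Even.neg_pow ⟨M, by omega⟩, ← pow_mul]; congr 1; omega
  have hx : -(c^2 * -s^2) = (s*c)^2 := by ring
  rw [l1, l2, hx] at K
  rw [K, show n+2 = 2*M+1 from by omega, show n+1 = 2*M from by omega]
  have hsub : Finset.range (M+1) ⊆ Finset.range (2*M+1) := by
    apply Finset.range_subset_range.mpr; omega
  have hvan : ∀ j ∈ Finset.range (2*M+1), j ∉ Finset.range (M+1) →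
      (cc (2*M) j : ℂ) * ((s*c)^2)^j = 0 := by
    intro j hj hnj
    simp only [Finset.mem_range] at hj hnj
    rw [cc_eq_zero (by omega) (by omega), Nat.cast_zero, zero_mul]
  calc ∑ j ∈ Finset.range (2*M+1), (cc (2*M) j : ℂ) * ((s*c)^2)^j
      = ∑ j ∈ Finset.range (M+1), (cc (2*M) j : ℂ) * ((s*c)^2)^j :=
        (Finset.sum_subset hsub hvan).symm
    _ = ∑ j ∈ Finset.range (M+1), (cc (2*M) (M+1-1-j) : ℂ) * ((s*c)^2)^(M+1-1-j) :=
        (Finset.sum_range_reflect (fun j => (cc (2*M) j : ℂ) * ((s*c)^2)^j) (M+1)).symm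
    _ = ∑ k ∈ Finset.range (M+1), (cc (2*M) (M-k) : ℂ) * ((s*c)^2)^(M-k) :=
        Finset.sum_congr rfl (fun j hj => by rw [show M+1-1-j = M-j from by omega])

lemma term_eq2 (M k : ℕ) (hM : 1 ≤ M) (hk : k ≤ M) (s c : ℂ) :
    2^(2*(M+k)) * ((M:ℂ)/(M+k)) * (((M+k).choose (2*k) : ℕ) : ℂ) * (2*s*c)^(2*(M-k))
    = 2^(4*M-1) * (cc (2*M) (M-k) : ℂ) * ((s*c)^2)^(M-k) := by
  have hMk : ((M:ℂ) + k) ≠ 0 := by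
    have h0 : ((M+k : ℕ) : ℂ) ≠ 0 := Nat.cast_ne_zero.mpr (by omega)
    push_cast at h0
    exact h0
  have hcc : ((M:ℂ) + k) * (cc (2*M) (M-k) : ℂ)
      = 2 * M * (((M+k).choose (2*k) : ℕ) : ℂ) := by
    have h1 := cc_mul M k hM hk
    have h2 : (((M+k) * cc (2*M) (M-k) : ℕ) : ℂ)
        = ((2*M * (M+k).choose (2*k) : ℕ) : ℂ) := by rw [h1]
    push_cast at h2
    linear_combination h2
  have hcc2 : ((M:ℂ)/(M+k)) * (((M+k).choose (2*k) : ℕ) : ℂ) * 2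
      = (cc (2*M) (M-k) : ℂ) := by
    rw [div_mul_eq_mul_div, div_mul_eq_mul_div, div_eq_iff hMk]
    linear_combination -hcc
  rw [show (2*s*c)^(2*(M-k)) = 2^(2*(M-k)) * ((s*c)^2)^(M-k) from by
    rw [show (2:ℂ)*s*c = 2*(s*c) from by ring, mul_pow, pow_mul (s*c) 2 (M-k)],
    show (2:ℂ)^(2*(M+k)) * ((M:ℂ)/(M+k)) * (((M+k).choose (2*k) : ℕ) : ℂ)
        * (2^(2*(M-k)) * ((s*c)^2)^(M-k))
      = 2^(2*(M+k)) * 2^(2*(M-k)) * (((M:ℂ)/(M+k)) * (((M+k).choose (2*k) : ℕ) : ℂ))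
        * ((s*c)^2)^(M-k) from by ring,
    ← pow_add, show 2*(M+k) + 2*(M-k) = (4*M-1)+1 from by omega, pow_succ]
  linear_combination ((2:ℂ)^(4*M-1) * ((s*c)^2)^(M-k)) * hcc2

lemma term_eq (M k : ℕ) (hM : 1 ≤ M) (hk : k ≤ M) (s c : ℂ) (hs : s ≠ 0) (hc : c ≠ 0) :
    2^(2*(M+k)) * ((M:ℂ)/(M+k)) * (((M+k).choose (2*k) : ℕ) : ℂ) *
      (1/(2*s*c)^(2*(M+k)-1))
    = 2^(4*M-1) * (cc (2*M) (M-k) : ℂ) * ((s*c)^2)^(M-k) / (2*s*c)^(4*M-1) := by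
  have hS : (2:ℂ)*s*c ≠ 0 := by
    simp [hs, hc]
  have h1 : (1:ℂ)/(2*s*c)^(2*(M+k)-1) = (2*s*c)^(2*(M-k)) / (2*s*c)^(4*M-1) := by
    rw [div_eq_div_iff (pow_ne_zero _ hS) (pow_ne_zero _ hS), one_mul, ← pow_add]
    congr 1
    omega
  rw [h1, mul_div_assoc', term_eq2 M k hM hk s c]

theorem stmt_8 (M : ℕ) (hM : 1 ≤ M) (x : ℂ) (hs : Complex.sinh x ≠ 0)
    (hc : Complex.cosh x ≠ 0) :
    Complex.cosh x / Complex.sinh x ^ (4 * M - 1)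
    = -(Complex.sinh x / Complex.cosh x ^ (4 * M - 1)) +
      ∑ k ∈ Finset.range (M + 1),
        2 ^ (2 * (M + k)) * ((M : ℂ) / (M + k)) * ((M + k).choose (2 * k)) *
          (1 / Complex.sinh (2 * x) ^ (2 * (M + k) - 1)) := by
  have h : Complex.cosh x ^ 2 - Complex.sinh x ^ 2 = 1 := Complex.cosh_sq_sub_sinh_sq x
  rw [Complex.sinh_two_mul x]
  set s := Complex.sinh x with hs'
  set c := Complex.cosh x with hc'
  have hterm : ∀ k ∈ Finset.range (M+1),
      2 ^ (2 * (M + k)) * ((M : ℂ) / (M + k)) * (((M + k).choose (2 * k) : ℕ) : ℂ) *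
        (1 / (2 * s * c) ^ (2 * (M + k) - 1))
      = 2^(4*M-1) * (cc (2*M) (M-k) : ℂ) * ((s*c)^2)^(M-k) / (2*s*c)^(4*M-1) :=
    fun k hk => term_eq M k hM (Nat.lt_succ_iff.mp (Finset.mem_range.mp hk)) s c hs hc
  have hassoc : ∀ k ∈ Finset.range (M+1),
      (2:ℂ)^(4*M-1) * (cc (2*M) (M-k) : ℂ) * ((s*c)^2)^(M-k)
      = 2^(4*M-1) * ((cc (2*M) (M-k) : ℂ) * ((s*c)^2)^(M-k)) := fun k _ => by ring
  rw [Finset.sum_congr rfl hterm, ← Finset.sum_div, Finset.sum_congr rfl hassoc,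
    ← Finset.mul_sum, ← key2 M hM s c h,
    show ((2:ℂ)*s*c)^(4*M-1) = 2^(4*M-1) * (s*c)^(4*M-1) from by
      rw [show (2:ℂ)*s*c = 2*(s*c) from by ring, mul_pow],
    mul_div_mul_left _ _ (pow_ne_zero _ (two_ne_zero))]
  obtain ⟨N, hN⟩ : ∃ N, 4*M = N+1 := ⟨4*M-1, by omega⟩
  rw [show 4*M-1 = N from by omega, hN]
  field_simp
  ring
end

section
/- For every natural number M ≥ 1 and every complex number x with sinh(x) ≠ 0 and cosh(x) ≠ 0, one has cosh(x)/sinh(x)^{4M+1} = −sinh(x)/cosh(x)^{4M+1} + ∑_{k=0}^{M} 2^{2(M+k)+1} C(M+k, 2k) · cosh(2x)/sinh(2x)^{2(M+k)+1}. -/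
lemma chooseId (n j : ℕ) :
    (n+2).choose (j+2) + n.choose j = 2 * ((n+1).choose (j+1)) + n.choose (j+2) := by
  have e1 : (n+2).choose (j+2) = (n+1).choose (j+1) + (n+1).choose (j+2) :=
    Nat.choose_succ_succ' (n+1) (j+1)
  have e2 : (n+1).choose (j+1) = n.choose j + n.choose (j+1) := Nat.choose_succ_succ' n j
  have e3 : (n+1).choose (j+2) = n.choose (j+1) + n.choose (j+2) := Nat.choose_succ_succ' n (j+1)
  omega

noncomputable def Raux (m : ℕ) (q : ℂ) : ℂ :=
  ∑ j ∈ Finset.range (m+1), ((2*m - j).choose j : ℂ) * q^j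

lemma R_rec (M : ℕ) (q : ℂ) :
    Raux (M+2) q = (2*q+1) * Raux (M+1) q - q^2 * Raux M q := by
  have e2 : Raux (M+2) q
      = (∑ j ∈ Finset.range (M+1), (((2*M-j)+2).choose (j+2) : ℂ) * q^(j+2))
        + ((2*M+3 : ℕ) : ℂ) * q + 1 := by
    rw [Raux, Finset.sum_range_succ', Finset.sum_range_succ']
    have h1 : (2*(M+2) - (0+1) : ℕ) = 2*M+3 := by omega
    have h0 : (2*(M+2) - 0 : ℕ) = 2*M+4 := by omega
    rw [h1, h0]
    simp [Nat.choose_one_right]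
    apply Finset.sum_congr rfl
    intro j hj
    simp only [Finset.mem_range] at hj
    have : 2*(M+2) - (j+1+1) = (2*M - j)+2 := by omega
    rw [this]
  have e1 : Raux (M+1) q
      = (∑ j ∈ Finset.range (M+1), (((2*M-j)+1).choose (j+1) : ℂ) * q^(j+1)) + 1 := by
    rw [Raux, Finset.sum_range_succ']
    have h0 : (2*(M+1) - 0 : ℕ) = 2*M+2 := by omega
    rw [h0]
    simp
    apply Finset.sum_congr rfl
    intro j hj
    simp only [Finset.mem_range] at hj
    have : 2*(M+1) - (j+1) = (2*M - j)+1 := by omega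
    rw [this]
  have e1' : Raux (M+1) q
      = (∑ j ∈ Finset.range (M+1), ((2*M-j).choose (j+2) : ℂ) * q^(j+2))
        + ((2*M+1 : ℕ) : ℂ) * q + 1 := by
    rw [Raux, Finset.sum_range_succ', Finset.sum_range_succ']
    have h1 : (2*(M+1) - (0+1) : ℕ) = 2*M+1 := by omega
    have h0 : (2*(M+1) - 0 : ℕ) = 2*M+2 := by omega
    rw [h1, h0]
    simp [Nat.choose_one_right]
    conv_rhs => rw [Finset.sum_range_succ]
    have hlast : 2*M - M = M := by omega
    rw [hlast]
    have : (Nat.choose M (M+2) : ℂ) = 0 := by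
      norm_cast
      exact Nat.choose_eq_zero_of_lt (by omega)
    rw [this]
    simp
    apply Finset.sum_congr rfl
    intro j hj
    simp only [Finset.mem_range] at hj
    have : 2*(M+1) - (j+1+1) = 2*M - j := by omega
    rw [this]
  have hA : 2*q * Raux (M+1) q
      = (∑ j ∈ Finset.range (M+1), 2 * (((2*M-j)+1).choose (j+1) : ℂ) * q^(j+2)) + 2*q := by
    rw [e1, mul_add, Finset.mul_sum]
    congr 1
    · apply Finset.sum_congr rfl; intro j hj; ring
    · ring
  have hB : q^2 * Raux M q
      = ∑ j ∈ Finset.range (M+1), ((2*M-j).choose j : ℂ) * q^(j+2) := by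
    rw [Raux, Finset.mul_sum]
    apply Finset.sum_congr rfl; intro j hj; ring
  have hsum : ∑ j ∈ Finset.range (M+1), (((2*M-j)+2).choose (j+2) : ℂ) * q^(j+2)
      = (∑ j ∈ Finset.range (M+1), 2 * (((2*M-j)+1).choose (j+1) : ℂ) * q^(j+2))
        + (∑ j ∈ Finset.range (M+1), ((2*M-j).choose (j+2) : ℂ) * q^(j+2))
        - (∑ j ∈ Finset.range (M+1), ((2*M-j).choose j : ℂ) * q^(j+2)) := by
    rw [← Finset.sum_add_distrib, ← Finset.sum_sub_distrib]
    apply Finset.sum_congr rfl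
    intro j hj
    have h := chooseId (2*M - j) j
    have hcast : (((2*M-j)+2).choose (j+2) : ℂ)
        = 2*(((2*M-j)+1).choose (j+1) : ℂ) + ((2*M-j).choose (j+2) : ℂ)
          - ((2*M-j).choose j : ℂ) := by
      have h2 := congrArg (Nat.cast : ℕ → ℂ) h
      push_cast at h2
      linear_combination h2
    rw [hcast]; ring
  have expand : (2*q+1) * Raux (M+1) q = 2*q*Raux (M+1) q + Raux (M+1) q := by ring
  rw [e2, expand, hA]
  nth_rewrite 1 [e1']
  rw [hB, hsum]
  push_cast
  ring

lemma Q_eq (M : ℕ) (q : ℂ) :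
    ∑ k ∈ Finset.range (M+1), ((M+k).choose (2*k) : ℂ) * q^(M-k) = Raux M q := by
  rw [Raux, ← Finset.sum_range_reflect]
  apply Finset.sum_congr rfl
  intro j hj
  simp only [Finset.mem_range] at hj
  have h1 : M + 1 - 1 - j = M - j := by omega
  rw [h1]
  have hA : M + (M-j) = 2*M - j := by omega
  have hB : M - (M-j) = j := by omega
  rw [hA, hB]
  have hC : 2*(M-j) = (2*M-j) - j := by omega
  rw [hC, Nat.choose_symm (by omega)]

lemma key_s9 (M : ℕ) (u : ℂ) :
    (u+1)^(2*M+1) + u^(2*M+1) = (2*u+1) * Raux M (u*(u+1)) := by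
  induction M using Nat.strong_induction_on with
  | _ M ih =>
    match M with
    | 0 => simp [Raux]; ring
    | 1 =>
      simp [Raux, Finset.sum_range_succ]
      ring
    | (M+2) =>
      have h1 := ih (M+1) (by omega)
      have h0 := ih M (by omega)
      have hrec := R_rec M (u*(u+1))
      have hstep : (u+1)^(2*(M+2)+1) + u^(2*(M+2)+1)
          = (2*(u*(u+1))+1) * ((u+1)^(2*(M+1)+1) + u^(2*(M+1)+1))
            - (u*(u+1))^2 * ((u+1)^(2*M+1)+u^(2*M+1)) := by ring
      rw [hstep, h1, h0, hrec]
      ring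

theorem stmt_9 (M : ℕ) (hM : 1 ≤ M) (x : ℂ) (hs : Complex.sinh x ≠ 0)
    (hc : Complex.cosh x ≠ 0) :
    Complex.cosh x / Complex.sinh x ^ (4 * M + 1)
    = -(Complex.sinh x / Complex.cosh x ^ (4 * M + 1)) +
      ∑ k ∈ Finset.range (M + 1),
        2 ^ (2 * (M + k) + 1) * ((M + k).choose (2 * k)) *
          (Complex.cosh (2 * x) / Complex.sinh (2 * x) ^ (2 * (M + k) + 1)) := by
  set s := Complex.sinh x with hsdef
  set c := Complex.cosh x with hcdef
  have hc2 : c^2 = s^2 + 1 := by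
    have h := Complex.cosh_sq_sub_sinh_sq x
    linear_combination h
  have hsinh2 : Complex.sinh (2*x) = 2 * s * c := by
    rw [Complex.sinh_two_mul]
  have hcosh2 : Complex.cosh (2*x) = c^2 + s^2 := by
    rw [Complex.cosh_two_mul]
  have hsc : s * c ≠ 0 := mul_ne_zero hs hc
  have hterm : ∀ k ∈ Finset.range (M+1),
      (2:ℂ) ^ (2 * (M + k) + 1) * ((M + k).choose (2 * k)) *
        (Complex.cosh (2 * x) / Complex.sinh (2 * x) ^ (2 * (M + k) + 1))
      = ((M + k).choose (2 * k) : ℂ) * ((s*c)^2)^(M-k) * ((c^2+s^2) / (s*c)^(4*M+1)) := by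
    intro k hk
    simp only [Finset.mem_range] at hk
    rw [hsinh2, hcosh2]
    have hpow : (s*c)^(4*M+1) = (s*c)^(2*(M+k)+1) * ((s*c)^2)^(M-k) := by
      rw [← pow_mul, ← pow_add]
      congr 1
      omega
    have h2 : ((2:ℂ) * s * c) ^ (2*(M+k)+1) = 2^(2*(M+k)+1) * (s*c)^(2*(M+k)+1) := by
      rw [mul_assoc, mul_pow]
    rw [h2, hpow]
    have h2n : (2:ℂ)^(2*(M+k)+1) ≠ 0 := pow_ne_zero _ two_ne_zero
    have hn1 : (s*c)^(2*(M+k)+1) ≠ 0 := pow_ne_zero _ hsc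
    have hn2 : ((s*c)^2)^(M-k) ≠ 0 := pow_ne_zero _ (pow_ne_zero _ hsc)
    field_simp
  rw [Finset.sum_congr rfl hterm, ← Finset.sum_mul, Q_eq]
  have hk := key_s9 M (s^2)
  have hq : s^2 * (s^2 + 1) = (s*c)^2 := by
    linear_combination (-(s^2)) * hc2
  rw [hq] at hk
  -- hk : (s^2+1)^(2M+1) + (s^2)^(2M+1) = (2*s^2+1) * Raux M ((s*c)^2)
  have hkey : (c^2+s^2) * Raux M ((s*c)^2) = c^(4*M+2) + s^(4*M+2) := by
    have hcc : c^(4*M+2) = (s^2+1)^(2*M+1) := by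
      rw [← hc2, ← pow_mul]
      congr 1; omega
    have hss : s^(4*M+2) = (s^2)^(2*M+1) := by
      rw [← pow_mul]; congr 1; omega
    rw [hcc, hss, hk]
    have : (c^2+s^2) = (2*s^2+1) := by linear_combination hc2
    rw [this]
  have hden : (s*c)^(4*M+1) ≠ 0 := pow_ne_zero _ hsc
  have hs' : s^(4*M+1) ≠ 0 := pow_ne_zero _ hs
  have hc' : c^(4*M+1) ≠ 0 := pow_ne_zero _ hc
  have hmain : Raux M ((s*c)^2) * ((c^2+s^2) / (s*c)^(4*M+1))
      = c/s^(4*M+1) + s/c^(4*M+1) := by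
    field_simp
    rw [mul_pow] at hkey
    linear_combination (s^(4*M+1) * c^(4*M+1)) * hkey
  rw [hmain]
  ring
end

section
/- Define c(n,k) = (2/4^k) · ∑_{j=1}^{k} (-1)^{k−j} C(2k, k−j) (2j)^{2n} for natural numbers n, k ≥ 1. Then for all n ≥ 1, the 2n-th derivative of coth at any real x with sinh(x) ≠ 0 equals ∑_{k=1}^{n} c(n,k) · cosh(x)/sinh(x)^{2k+1}. -/
/-- The coefficients c(n,k) as real numbers. -/
noncomputable def cCoeff (n k : ℕ) : ℝ :=
  (2 / 4 ^ k) * ∑ j ∈ Finset.Icc 1 k,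
    (-1 : ℝ) ^ (k - j) * ((2 * k).choose (k - j)) * (2 * j : ℝ) ^ (2 * n)

section Aux

lemma choose_key (k d : ℕ) (h1 : 1 ≤ d) (hd : d ≤ k) :
    (2*k).choose d * (d * (2*k - d)) = 2*k*(2*k-1) * ((2*k-2).choose (d-1)) := by
  obtain ⟨e, rfl⟩ : ∃ e, d = e + 1 := ⟨d - 1, by omega⟩
  obtain ⟨m, hm⟩ : ∃ m, 2*k = m + 2 := ⟨2*k - 2, by omega⟩
  rw [hm]
  have h2 : m + 2 - (e+1) = (m + 1 - e) := by omega
  have he : e ≤ m := by omega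
  have step1 : (m+2).choose (e+1) * (e+1) = (m+2) * ((m+1).choose e) := by
    have h := Nat.add_one_mul_choose_eq (m+1) e
    exact h.symm
  have step2 : (m+1).choose e * (m+1-e) = (m+1) * (m.choose e) := by
    rw [← Nat.choose_symm he]
    have h3 : m + 1 - e = (m - e) + 1 := by omega
    rw [show (m+1).choose e = (m+1).choose (m+1-e) by rw [Nat.choose_symm (by omega)], h3]
    have h := Nat.add_one_mul_choose_eq m (m-e)
    exact h.symm
  have hsimp : m + 2 - 2 = m ∧ m + 2 - 1 = m + 1 ∧ e + 1 - 1 = e := by omega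
  rw [hsimp.1, hsimp.2.1, hsimp.2.2, h2]
  calc (m+2).choose (e+1) * ((e+1) * (m+1-e))
      = ((m+2).choose (e+1) * (e+1)) * (m+1-e) := by ring
    _ = (m+2) * ((m+1).choose e * (m+1-e)) := by rw [step1]; ring
    _ = (m+2) * ((m+1) * m.choose e) := by rw [step2]
    _ = (m+2)*(m+1) * m.choose e := by ring

lemma cCoeff_rec (n k : ℕ) (hk : 1 ≤ k) :
    cCoeff (n+1) k = 4*(k:ℝ)^2 * cCoeff n k + 2*(k:ℝ)*(2*(k:ℝ)-1) * cCoeff n (k-1) := by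
  obtain ⟨m, rfl⟩ : ∃ m, k = m + 1 := ⟨k-1, by omega⟩
  simp only [cCoeff, Nat.add_sub_cancel]
  have main : ∑ j ∈ Finset.Icc 1 (m+1), (-1:ℝ)^(m+1-j) * ((2*(m+1)).choose (m+1-j)) * (2*(j:ℝ))^(2*(n+1))
      = 4*((m:ℝ)+1)^2 * ∑ j ∈ Finset.Icc 1 (m+1), (-1:ℝ)^(m+1-j) * ((2*(m+1)).choose (m+1-j)) * (2*(j:ℝ))^(2*n)
        + 8*((m:ℝ)+1)*(2*(m:ℝ)+1) * ∑ j ∈ Finset.Icc 1 m, (-1:ℝ)^(m-j) * ((2*m).choose (m-j)) * (2*(j:ℝ))^(2*n) := by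
    rw [Finset.sum_Icc_succ_top (by omega : 1 ≤ m + 1),
        Finset.sum_Icc_succ_top (by omega : 1 ≤ m + 1), Finset.mul_sum]
    have hterm : ∀ j ∈ Finset.Icc 1 m,
        (-1:ℝ)^(m+1-j) * ((2*(m+1)).choose (m+1-j)) * (2*(j:ℝ))^(2*(n+1))
        = 4*((m:ℝ)+1)^2 * ((-1:ℝ)^(m+1-j) * ((2*(m+1)).choose (m+1-j)) * (2*(j:ℝ))^(2*n))
          + 8*((m:ℝ)+1)*(2*(m:ℝ)+1) * ((-1:ℝ)^(m-j) * ((2*m).choose (m-j)) * (2*(j:ℝ))^(2*n)) := by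
      intro j hj
      simp only [Finset.mem_Icc] at hj
      have hd := choose_key (m+1) (m+1-j) (by omega) (by omega)
      rw [show 2*(m+1)-(m+1-j) = m+1+j by omega, show 2*(m+1)-1 = 2*m+1 by omega,
          show 2*(m+1)-2 = 2*m by omega, show (m+1-j)-1 = m-j by omega] at hd
      have hdR : ((2*(m+1)).choose (m+1-j) : ℝ) * ((((m:ℝ)+1)-j)*(((m:ℝ)+1)+j))
          = 2*((m:ℝ)+1)*(2*(m:ℝ)+1) * (((2*m).choose (m-j) : ℝ)) := by
        have := congrArg (Nat.cast : ℕ → ℝ) hd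
        push_cast [Nat.cast_sub (by omega : j ≤ m + 1)] at this
        linarith [this]
      rw [show ((-1:ℝ))^(m+1-j) = (-1)^(m-j) * (-1) by
            rw [show m+1-j = (m-j)+1 by omega, pow_succ],
          show 2*(n+1) = 2*n+2 by ring, pow_add]
      linear_combination (4*(-1:ℝ)^(m-j)*(2*(j:ℝ))^(2*n)) * hdR
    have e : (4*((m:ℝ)+1)^2) * ∑ j ∈ Finset.Icc 1 m,
          (-1:ℝ)^(m+1-j) * ((2*(m+1)).choose (m+1-j)) * (2*(j:ℝ))^(2*n)
        = ∑ j ∈ Finset.Icc 1 m,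
          4*((m:ℝ)+1)^2 * ((-1:ℝ)^(m+1-j) * ((2*(m+1)).choose (m+1-j)) * (2*(j:ℝ))^(2*n)) := by
      rw [Finset.mul_sum]
    have htop : (-1:ℝ)^(m+1-(m+1)) * ((2*(m+1)).choose (m+1-(m+1))) * (2*((m+1:ℕ):ℝ))^(2*(n+1))
        = 4*((m:ℝ)+1)^2 * ((-1:ℝ)^(m+1-(m+1)) * ((2*(m+1)).choose (m+1-(m+1))) * (2*((m+1:ℕ):ℝ))^(2*n)) := by
      simp only [Nat.sub_self, pow_zero, Nat.choose_zero_right, Nat.cast_one, one_mul,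
        show 2*(n+1) = 2*n+2 by ring, pow_add]
      push_cast
      ring
    rw [mul_add (4*((m:ℝ)+1)^2), e, Finset.sum_congr rfl hterm, Finset.sum_add_distrib, htop]
    ring
  push_cast at main ⊢
  rw [main, pow_succ]
  ring

lemma alt_partial (m r : ℕ) (h : r < m) :
    ∑ i ∈ Finset.range (r+1), (-1:ℝ)^i * (m.choose i) = (-1:ℝ)^r * ((m-1).choose r) := by
  induction r with
  | zero => simp
  | succ r IH =>
    rw [Finset.sum_range_succ, IH (by omega)]
    have hp : m.choose (r+1) = (m-1).choose r + (m-1).choose (r+1) := by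
      obtain ⟨m', rfl⟩ : ∃ m', m = m' + 1 := ⟨m-1, by omega⟩
      simp [Nat.choose_succ_succ]
    rw [hp]
    push_cast
    ring

lemma cCoeff_zero (k : ℕ) (hk : 1 ≤ k) :
    cCoeff 0 k = (2/4^k) * ((-1:ℝ)^(k-1) * ((2*k-1).choose (k-1))) := by
  unfold cCoeff
  congr 1
  have h1 : ∑ j ∈ Finset.Icc 1 k, (-1:ℝ)^(k-j) * ((2*k).choose (k-j)) * (2*(j:ℝ))^(2*0)
      = ∑ i ∈ Finset.range k, (-1:ℝ)^(k-1-i) * ((2*k).choose (k-1-i)) := by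
    rw [← Finset.Ico_add_one_right_eq_Icc, Finset.sum_Ico_eq_sum_range]
    apply Finset.sum_congr (by congr 1)
    intro i _
    rw [mul_zero, pow_zero, mul_one, show k - (1+i) = k-1-i by omega]
  rw [h1, ← Finset.sum_range_reflect]
  have h2 : ∀ i ∈ Finset.range k, (-1:ℝ)^(k-1-(k-1-i)) * ((2*k).choose (k-1-(k-1-i)))
      = (-1:ℝ)^i * ((2*k).choose i) := by
    intro i hi
    simp only [Finset.mem_range] at hi
    rw [show k-1-(k-1-i) = i by omega]
  rw [Finset.sum_congr rfl h2]
  have h3 := alt_partial (2*k) (k-1) (by omega)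
  rw [show k-1+1 = k by omega] at h3
  exact h3

lemma key2_s10 (k : ℕ) (hk : 2 ≤ k) :
    k * ((2*k-1).choose (k-1)) = 2*(2*k-1) * ((2*k-3).choose (k-2)) := by
  obtain ⟨m, rfl⟩ : ∃ m, k = m + 2 := ⟨k-2, by omega⟩
  rw [show 2*(m+2)-1 = 2*m+3 by omega, show m+2-1 = m+1 by omega,
      show 2*(m+2)-3 = 2*m+1 by omega, show m+2-2 = m by omega]
  have h1 : (2*m+3).choose (m+1) = (2*m+3).choose (m+2) := by
    rw [← Nat.choose_symm (by omega : m+1 ≤ 2*m+3)]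
    congr 1; omega
  have h2 := Nat.add_one_mul_choose_eq (2*m+2) (m+1)
  have h3 : (2*m+2).choose (m+1) = 2 * ((2*m+1).choose m) := by
    rw [show 2*m+2 = (2*m+1)+1 by ring, Nat.choose_succ_succ]
    simp only [Nat.succ_eq_add_one]
    have e : (2*m+1).choose (m+1) = (2*m+1).choose m := by
      rw [← Nat.choose_symm (by omega : m+1 ≤ 2*m+1)]
      congr 1; omega
    omega
  rw [h1]
  have h5 := h2
  rw [h3] at h5
  zify at h5 ⊢
  linear_combination -h5

lemma cCoeff_one_vanish (k : ℕ) (hk : 2 ≤ k) : cCoeff 1 k = 0 := by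
  rw [show (1:ℕ) = 0 + 1 from rfl, cCoeff_rec 0 k (by omega),
      cCoeff_zero k (by omega), cCoeff_zero (k-1) (by omega)]
  rw [show k-1-1 = k-2 by omega, show 2*(k-1)-1 = 2*k-3 by omega]
  have hc := key2_s10 k hk
  have hcR : (k:ℝ) * ((2*k-1).choose (k-1)) = 2*(2*(k:ℝ)-1) * ((2*k-3).choose (k-2)) := by
    have := congrArg (Nat.cast : ℕ → ℝ) hc
    push_cast [Nat.cast_sub (by omega : 1 ≤ 2*k), Nat.cast_sub (by omega : 3 ≤ 2*k)] at this
    linarith [this]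
  have hsgn : (-1:ℝ)^(k-1) = (-1)^(k-2) * (-1) := by
    rw [show k-1 = (k-2)+1 by omega, pow_succ]
  have h4 : (4:ℝ)^k = 4^(k-1) * 4 := by
    rw [← pow_succ]; congr 1; omega
  rw [hsgn, h4]
  have h40 : (4:ℝ)^(k-1) ≠ 0 := by positivity
  field_simp
  linear_combination (-2*(k:ℝ)*(-1:ℝ)^(k-2)) * hcR

lemma cCoeff_vanish (n : ℕ) (hn : 1 ≤ n) : ∀ k, n < k → cCoeff n k = 0 := by
  induction n, hn using Nat.le_induction with
  | base => exact fun k hk => cCoeff_one_vanish k (by omega)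
  | succ n hn IH =>
    intro k hk
    rw [cCoeff_rec n k (by omega), IH k (by omega), IH (k-1) (by omega)]
    ring

lemma hasDerivAt_inv_pow_sinh (m : ℕ) (hm : 1 ≤ m) (x : ℝ) (hx : Real.sinh x ≠ 0) :
    HasDerivAt (fun y => 1 / Real.sinh y ^ m)
      (-(m : ℝ) * (Real.cosh x / Real.sinh x ^ (m+1))) x := by
  have hu : HasDerivAt (fun y => Real.sinh y ^ m)
      ((m : ℕ) * Real.sinh x ^ (m-1) * Real.cosh x) x :=
    (Real.hasDerivAt_sinh x).pow _
  have hne : Real.sinh x ^ m ≠ 0 := pow_ne_zero _ hx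
  have H := (hasDerivAt_const x (1:ℝ)).div hu hne
  refine H.congr_deriv (Eq.symm ?_)
  set s := Real.sinh x with hs
  have e0 : s ≠ 0 := hx
  have e1 : s^m = s^(m-1) * s := by rw [← pow_succ]; congr 1; omega
  have e2 : s^(m+1) = s^(m-1) * s^2 := by rw [← pow_add]; congr 1; omega
  have ht0 : s^(m-1) ≠ 0 := pow_ne_zero _ hx
  rw [e1, e2]
  push_cast
  field_simp
  ring

lemma hasDerivAt_f (k : ℕ) (x : ℝ) (hx : Real.sinh x ≠ 0) :
    HasDerivAt (fun y => Real.cosh y / Real.sinh y ^ (2*k+1))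
      (-(2*k : ℝ) * (1 / Real.sinh x ^ (2*k)) - (2*k+1 : ℝ) * (1 / Real.sinh x ^ (2*k+2))) x := by
  have hu : HasDerivAt (fun y => Real.sinh y ^ (2*k+1))
      ((2*k+1 : ℕ) * Real.sinh x ^ (2*k) * Real.cosh x) x :=
    (Real.hasDerivAt_sinh x).pow _
  have hne : Real.sinh x ^ (2*k+1) ≠ 0 := pow_ne_zero _ hx
  have H := (Real.hasDerivAt_cosh x).div hu hne
  refine H.congr_deriv (Eq.symm ?_)
  set s := Real.sinh x with hs
  have hc : Real.cosh x ^ 2 = 1 + s ^ 2 := by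
    have := Real.cosh_sq_sub_sinh_sq x; nlinarith [this]
  have e0 : s ≠ 0 := hx
  have e1 : s^(2*k+1) = s^(2*k) * s := pow_succ s (2*k)
  have e2 : s^(2*k+2) = s^(2*k) * s^2 := by rw [← pow_add]
  have ht0 : s^(2*k) ≠ 0 := pow_ne_zero _ hx
  rw [e1, e2]
  push_cast
  field_simp
  linear_combination (2*(k:ℝ)+1) * hc

lemma hasDerivAt_coth (y : ℝ) (hy : Real.sinh y ≠ 0) :
    HasDerivAt (fun z => Real.cosh z / Real.sinh z) (-(1 / Real.sinh y ^ 2)) y := by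
  have H := (Real.hasDerivAt_cosh y).div (Real.hasDerivAt_sinh y) hy
  refine H.congr_deriv (Eq.symm ?_)
  have hc : Real.cosh y ^ 2 = 1 + Real.sinh y ^ 2 := by
    have := Real.cosh_sq_sub_sinh_sq y; nlinarith [this]
  field_simp
  linarith [hc]

lemma deriv_congr_sinh {f g : ℝ → ℝ} (h : ∀ y, Real.sinh y ≠ 0 → f y = g y)
    (x : ℝ) (hx : Real.sinh x ≠ 0) : deriv f x = deriv g x := by
  apply Filter.EventuallyEq.deriv_eq
  have hS : IsOpen {y : ℝ | Real.sinh y ≠ 0} :=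
    IsOpen.preimage Real.continuous_sinh isOpen_ne
  filter_upwards [hS.mem_nhds hx] with y hy using h y hy

lemma step4 (n : ℕ) (x : ℝ) :
    ∑ k ∈ Finset.Icc 1 (n+1), cCoeff (n+1) k *
      ((4*(k:ℝ)^2) * (Real.cosh x / Real.sinh x^(2*k+1))
        + (2*(k:ℝ)+1)*(2*(k:ℝ)+2) * (Real.cosh x / Real.sinh x^(2*k+3)))
    = ∑ k ∈ Finset.Icc 1 (n+2), cCoeff (n+2) k * (Real.cosh x / Real.sinh x^(2*k+1)) := by
  have hrec : ∀ k ∈ Finset.Icc 1 (n+2),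
      cCoeff (n+2) k * (Real.cosh x / Real.sinh x^(2*k+1))
      = 4*(k:ℝ)^2*cCoeff (n+1) k * (Real.cosh x / Real.sinh x^(2*k+1))
        + 2*(k:ℝ)*(2*(k:ℝ)-1)*cCoeff (n+1) (k-1) * (Real.cosh x / Real.sinh x^(2*k+1)) := by
    intro k hk
    simp only [Finset.mem_Icc] at hk
    rw [show n+2 = (n+1)+1 from rfl, cCoeff_rec (n+1) k (by omega)]
    ring
  rw [Finset.sum_congr rfl hrec, Finset.sum_add_distrib,
      Finset.sum_Icc_succ_top (by omega : 1 ≤ n+2),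
      cCoeff_vanish (n+1) (by omega) (n+2) (by omega)]
  have hsplit : ∑ k ∈ Finset.Icc 1 (n+2),
        2*(k:ℝ)*(2*(k:ℝ)-1)*cCoeff (n+1) (k-1) * (Real.cosh x / Real.sinh x^(2*k+1))
      = ∑ k ∈ Finset.Icc 1 (n+1),
        2*((k:ℝ)+1)*(2*(k:ℝ)+1)*cCoeff (n+1) k * (Real.cosh x / Real.sinh x^(2*k+3)) := by
    rw [← Finset.Ico_add_one_right_eq_Icc, Finset.sum_eq_sum_Ico_succ_bot (by omega)]
    have h1 : cCoeff (n+1) (1-1) = 0 := by simp [cCoeff]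
    have h2 : ∑ k ∈ Finset.Ico (1+1) (n+2+1),
          2*(k:ℝ)*(2*(k:ℝ)-1)*cCoeff (n+1) (k-1) * (Real.cosh x / Real.sinh x^(2*k+1))
        = ∑ k ∈ Finset.Icc 1 (n+1),
          2*((k:ℝ)+1)*(2*(k:ℝ)+1)*cCoeff (n+1) k * (Real.cosh x / Real.sinh x^(2*k+3)) := by
      rw [Finset.sum_Ico_eq_sum_range, ← Finset.Ico_add_one_right_eq_Icc, Finset.sum_Ico_eq_sum_range]
      apply Finset.sum_congr (by congr 1)
      intro i _
      rw [show (1+1)+i-1 = 1+i by omega, show 2*((1+1)+i)+1 = 2*(1+i)+3 by omega]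
      push_cast
      ring
    rw [h2, h1]
    ring
  rw [hsplit]
  have hL : ∑ k ∈ Finset.Icc 1 (n+1), cCoeff (n+1) k *
      ((4*(k:ℝ)^2) * (Real.cosh x / Real.sinh x^(2*k+1))
        + (2*(k:ℝ)+1)*(2*(k:ℝ)+2) * (Real.cosh x / Real.sinh x^(2*k+3)))
      = ∑ k ∈ Finset.Icc 1 (n+1),
        (4*(k:ℝ)^2*cCoeff (n+1) k * (Real.cosh x / Real.sinh x^(2*k+1))
          + 2*((k:ℝ)+1)*(2*(k:ℝ)+1)*cCoeff (n+1) k * (Real.cosh x / Real.sinh x^(2*k+3))) := by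
    apply Finset.sum_congr rfl
    intro k _
    ring
  rw [hL, Finset.sum_add_distrib]
  ring

lemma coth_main (n : ℕ) : ∀ x : ℝ, Real.sinh x ≠ 0 →
    iteratedDeriv (2*(n+1)) (fun y => Real.cosh y / Real.sinh y) x
    = ∑ k ∈ Finset.Icc 1 (n+1), cCoeff (n+1) k * (Real.cosh x / Real.sinh x ^ (2*k+1)) := by
  induction n with
  | zero =>
    intro x hx
    rw [show 2*(0+1) = 1+1 from rfl, iteratedDeriv_succ, iteratedDeriv_one]
    rw [deriv_congr_sinh (fun y hy => (hasDerivAt_coth y hy).deriv) x hx]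
    have h2 : HasDerivAt (fun y => -(1 / Real.sinh y ^ 2))
        (2 * (Real.cosh x / Real.sinh x ^ 3)) x := by
      have H := (hasDerivAt_inv_pow_sinh 2 (by omega) x hx).neg
      refine H.congr_deriv (Eq.symm ?_)
      norm_num
    rw [h2.deriv, Finset.Icc_self, Finset.sum_singleton]
    have hc : cCoeff 1 1 = 2 := by
      simp [cCoeff]
      norm_num
    rw [hc]
  | succ n IH =>
    intro x hx
    rw [show 2*(n+1+1) = (2*(n+1)+1)+1 by ring, iteratedDeriv_succ, iteratedDeriv_succ]
    have step1 : ∀ y, Real.sinh y ≠ 0 →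
        deriv (iteratedDeriv (2*(n+1)) (fun y => Real.cosh y / Real.sinh y)) y
        = ∑ k ∈ Finset.Icc 1 (n+1), cCoeff (n+1) k *
            (-(2*(k:ℝ)) * (1 / Real.sinh y ^ (2*k)) - (2*(k:ℝ)+1) * (1 / Real.sinh y ^ (2*k+2))) := by
      intro y hy
      rw [deriv_congr_sinh IH y hy]
      have H : HasDerivAt (fun z => ∑ k ∈ Finset.Icc 1 (n+1),
          cCoeff (n+1) k * (Real.cosh z / Real.sinh z ^ (2*k+1)))
          (∑ k ∈ Finset.Icc 1 (n+1), cCoeff (n+1) k *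
            (-(2*(k:ℝ)) * (1 / Real.sinh y ^ (2*k)) - (2*(k:ℝ)+1) * (1 / Real.sinh y ^ (2*k+2)))) y := by
        apply HasDerivAt.fun_sum
        intro k _
        have := (hasDerivAt_f k y hy).const_mul (cCoeff (n+1) k)
        exact this
      exact H.deriv
    rw [deriv_congr_sinh step1 x hx]
    have step3 : HasDerivAt (fun y => ∑ k ∈ Finset.Icc 1 (n+1), cCoeff (n+1) k *
          (-(2*(k:ℝ)) * (1 / Real.sinh y ^ (2*k)) - (2*(k:ℝ)+1) * (1 / Real.sinh y ^ (2*k+2))))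
        (∑ k ∈ Finset.Icc 1 (n+1), cCoeff (n+1) k *
          ((4*(k:ℝ)^2) * (Real.cosh x / Real.sinh x^(2*k+1))
            + (2*(k:ℝ)+1)*(2*(k:ℝ)+2) * (Real.cosh x / Real.sinh x^(2*k+3)))) x := by
      apply HasDerivAt.fun_sum
      intro k hk
      simp only [Finset.mem_Icc] at hk
      have hA := (hasDerivAt_inv_pow_sinh (2*k) (by omega) x hx).const_mul (-(2*(k:ℝ)))
      have hB := (hasDerivAt_inv_pow_sinh (2*k+2) (by omega) x hx).const_mul (2*(k:ℝ)+1)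
      have := (hA.sub hB).const_mul (cCoeff (n+1) k)
      refine this.congr_deriv (Eq.symm ?_)
      push_cast
      ring
    rw [step3.deriv, step4 n x]

end Aux

theorem stmt_10 (n : ℕ) (hn : 1 ≤ n) (x : ℝ) (hx : Real.sinh x ≠ 0) :
    iteratedDeriv (2 * n) (fun y => Real.cosh y / Real.sinh y) x
    = ∑ k ∈ Finset.Icc 1 n,
        cCoeff n k * (Real.cosh x / Real.sinh x ^ (2 * k + 1)) := by
  obtain ⟨m, rfl⟩ : ∃ m, n = m + 1 := ⟨n - 1, by omega⟩
  exact coth_main m x hx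
end

section
/- Define h(k,n) for 1 ≤ k ≤ n by h(1,n) = 1 and h(k,n) = ∑_{j=k−1}^{n−1} h(k−1, j)/j² for k ≥ 2. Define v(n,k) = (−1)^n (2k)! · 2^{2(n−k)} / (n² C(2n, n)) · h(k,n) for 1 ≤ k ≤ n and v(n,k)=0 otherwise. Then v(n,n) = (−1)^n for all n ≥ 1, and for n ≥ 2, 1 ≤ k ≤ n: v(n,k) = −(2k(2k−1)/(2n(2n−1))) v(n−1, k−1) − (4(n−1)²/(2n(2n−1))) v(n−1, k). -/
/-- The numbers h(k,n): h(1,n) = 1 and h(k,n) = ∑_{j=k-1}^{n-1} h(k-1,j)/j². -/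
def hNum : ℕ → ℕ → ℚ
  | 0, _ => 0
  | 1, _ => 1
  | (k + 2), n => ∑ j ∈ Finset.Icc (k + 1) (n - 1), hNum (k + 1) j / (j : ℚ) ^ 2

/-- v(n,k) = (−1)^n (2k)! 2^{2(n−k)} h(k,n) / (n² C(2n,n)) for 1 ≤ k ≤ n, else 0. -/
def vEnt (n k : ℕ) : ℚ :=
  if 1 ≤ k ∧ k ≤ n then
    (-1 : ℚ) ^ n * ((2 * k).factorial : ℚ) * 2 ^ (2 * (n - k)) /
      ((n : ℚ) ^ 2 * ((2 * n).choose n)) * hNum k n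
  else 0

lemma hNum_gt (j n : ℕ) (h : n < j + 2) : hNum (j + 2) n = 0 := by
  rw [hNum, Finset.Icc_eq_empty (by omega), Finset.sum_empty]

lemma hNum_rec (j p : ℕ) (h : j + 1 ≤ p + 1) :
    hNum (j + 2) (p + 2) = hNum (j + 2) (p + 1) + hNum (j + 1) (p + 1) / ((p : ℚ) + 1) ^ 2 := by
  rw [hNum, hNum]
  have e1 : p + 2 - 1 = p + 1 := rfl
  have e2 : p + 1 - 1 = p := rfl
  rw [e1, e2]
  rw [Finset.sum_Icc_succ_top h]
  push_cast
  ring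

lemma hNum_one (n : ℕ) : hNum 1 n = 1 := rfl

lemma hNum_zero (n : ℕ) : hNum 0 n = 0 := rfl

lemma hNum_rec' (k n : ℕ) (hk : 1 ≤ k) (hkn : k ≤ n) (hn : 2 ≤ n) :
    hNum k n = hNum k (n - 1) + hNum (k - 1) (n - 1) / ((n : ℚ) - 1) ^ 2 := by
  obtain ⟨p, rfl⟩ : ∃ p, n = p + 2 := ⟨n - 2, by omega⟩
  match k, hk with
  | 1, _ => simp [hNum_one, hNum_zero]
  | (j + 2), _ =>
    have : (((p : ℕ) + 2 : ℕ) : ℚ) - 1 = (p : ℚ) + 1 := by push_cast; ring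
    rw [this]
    have e : p + 2 - 1 = p + 1 := rfl
    rw [e]
    have e2 : j + 2 - 1 = j + 1 := rfl
    rw [e2]
    exact hNum_rec j p (by omega)

lemma hNum_diag : ∀ n : ℕ, hNum (n + 1) (n + 1) = 1 / ((n.factorial : ℚ)) ^ 2 := by
  intro n
  induction n with
  | zero => simp [hNum_one]
  | succ p ih =>
    rw [hNum_rec p p (by omega), hNum_gt p (p + 1) (by omega), ih]
    rw [Nat.factorial_succ]
    push_cast
    have hp : ((p.factorial : ℚ)) ≠ 0 := by positivity
    field_simp
    ring

lemma sign_succ (m : ℕ) : (-1 : ℚ) ^ (m + 1) = -(-1 : ℚ) ^ m := by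
  rw [pow_succ]; ring

lemma part1 (n : ℕ) (hn : 1 ≤ n) : vEnt n n = (-1 : ℚ) ^ n := by
  obtain ⟨m, rfl⟩ : ∃ m, n = m + 1 := ⟨n - 1, by omega⟩
  rw [vEnt, if_pos ⟨by omega, le_refl _⟩, hNum_diag]
  rw [show m + 1 - (m + 1) = 0 from by omega]
  have h0 := Nat.choose_mul_factorial_mul_factorial (show m + 1 ≤ 2 * (m + 1) by omega)
  rw [show 2 * (m + 1) - (m + 1) = m + 1 from by omega] at h0
  have hfact : ((2 * (m + 1)).factorial : ℚ)
      = ((2 * (m + 1)).choose (m + 1)) * (m + 1).factorial * (m + 1).factorial := by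
    exact_mod_cast (congrArg (Nat.cast : ℕ → ℚ) h0).symm
  rw [hfact, Nat.factorial_succ]
  have hm1 : ((m : ℚ) + 1) ≠ 0 := by positivity
  have hf : ((m.factorial : ℚ)) ≠ 0 := by positivity
  have hCm : (((2 * (m + 1)).choose (m + 1) : ℕ) : ℚ) ≠ 0 :=
    Nat.cast_ne_zero.mpr (Nat.choose_pos (by omega)).ne'
  push_cast
  field_simp

lemma key_s14 (m j : ℕ) (hm : 1 ≤ m) (hj : j ≤ m) :
    vEnt (m + 1) (j + 1)
      = -((2 * ((j : ℚ) + 1) * (2 * ((j : ℚ) + 1) - 1))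
            / (2 * ((m : ℚ) + 1) * (2 * ((m : ℚ) + 1) - 1))) * vEnt m j
        - ((4 * (m : ℚ) ^ 2) / (2 * ((m : ℚ) + 1) * (2 * ((m : ℚ) + 1) - 1))) * vEnt m (j + 1) := by
  have hm0 : (m : ℚ) ≠ 0 := Nat.cast_ne_zero.mpr (by omega)
  have hmn : (0 : ℚ) ≤ (m : ℚ) := Nat.cast_nonneg m
  have hm1 : ((m : ℚ) + 1) ≠ 0 := by positivity
  have h2m1 : (2 * (m : ℚ) + 1) ≠ 0 := by positivity
  have h2m1' : (2 * ((m : ℚ) + 1) - 1) ≠ 0 := by intro h; linarith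
  have hCm : (((2 * m).choose m : ℕ) : ℚ) ≠ 0 :=
    Nat.cast_ne_zero.mpr (Nat.choose_pos (by omega)).ne'
  have hC : ((m : ℚ) + 1) * (((2 * (m + 1)).choose (m + 1) : ℕ) : ℚ)
      = 2 * (2 * (m : ℚ) + 1) * (((2 * m).choose m : ℕ) : ℚ) := by
    have h := Nat.succ_mul_centralBinom_succ m
    rw [Nat.centralBinom_eq_two_mul_choose, Nat.centralBinom_eq_two_mul_choose] at h
    exact_mod_cast h
  have hDen : (((m + 1 : ℕ) : ℚ)) ^ 2 * (((2 * (m + 1)).choose (m + 1) : ℕ) : ℚ)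
      = ((m : ℚ) + 1) * (2 * (2 * (m : ℚ) + 1) * (((2 * m).choose m : ℕ) : ℚ)) := by
    push_cast
    push_cast at hC
    linear_combination ((m : ℚ) + 1) * hC
  by_cases hcase : j = m
  · -- k = n case
    subst hcase
    rw [part1 (j + 1) (by omega), part1 j (by omega), vEnt, if_neg (by omega), sign_succ]
    have hne : (2 * ((j : ℚ) + 1) * (2 * ((j : ℚ) + 1) - 1)) ≠ 0 := by
      have : (0 : ℚ) ≤ (j : ℚ) := Nat.cast_nonneg j
      intro h
      rcases mul_eq_zero.mp h with h' | h' <;> nlinarith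
    field_simp
    ring
  · have hjm : j < m := lt_of_le_of_ne hj hcase
    rcases Nat.eq_zero_or_pos j with rfl | hj1
    · -- k = 1 case
      rw [vEnt, vEnt, vEnt, if_pos ⟨le_refl 1, by omega⟩,
        if_neg (by omega), if_pos ⟨le_refl 1, hm⟩]
      rw [hNum_one, hNum_one]
      have hp : (2 : ℚ) ^ (2 * (m + 1 - 1)) = 4 * 2 ^ (2 * (m - 1)) := by
        rw [show 2 * (m + 1 - 1) = 2 * (m - 1) + 2 from by omega]; ring
      rw [hp, hDen, sign_succ]
      push_cast
      have h2m1'' : (1 + (m : ℚ) * 2) ≠ 0 := by positivity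
      field_simp
      ring_nf
      field_simp
      ring
    · -- 1 ≤ j < m
      rw [vEnt, vEnt, vEnt, if_pos ⟨by omega, by omega⟩,
        if_pos ⟨by omega, by omega⟩, if_pos ⟨by omega, by omega⟩]
      have hrec : hNum (j + 1) (m + 1)
          = hNum (j + 1) m + hNum j m / (((m + 1 : ℕ) : ℚ) - 1) ^ 2 := by
        have := hNum_rec' (j + 1) (m + 1) (by omega) (by omega) (by omega)
        simpa using this
      rw [hrec]
      have hp : (2 : ℚ) ^ (2 * (m + 1 - (j + 1))) = 4 * 2 ^ (2 * (m - (j + 1))) := by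
        rw [show 2 * (m + 1 - (j + 1)) = 2 * (m - (j + 1)) + 2 from by omega]; ring
      have hp2 : (2 : ℚ) ^ (2 * (m - j)) = 4 * 2 ^ (2 * (m - (j + 1))) := by
        rw [show 2 * (m - j) = 2 * (m - (j + 1)) + 2 from by omega]; ring
      have hF : ((2 * (j + 1)).factorial : ℚ)
          = (2 * (j : ℚ) + 2) * (2 * (j : ℚ) + 1) * ((2 * j).factorial : ℚ) := by
        rw [show 2 * (j + 1) = (2 * j) + 1 + 1 from by omega, Nat.factorial_succ,
          Nat.factorial_succ]
        push_cast; ring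
      rw [hp, hp2, hF, hDen, sign_succ]
      push_cast
      simp only [add_sub_cancel_right]
      field_simp
      ring

theorem stmt_14 :
    (∀ n : ℕ, 1 ≤ n → vEnt n n = (-1 : ℚ) ^ n) ∧
    (∀ n k : ℕ, 2 ≤ n → 1 ≤ k → k ≤ n →
      vEnt n k = -((2 * k * (2 * k - 1) : ℚ) / (2 * n * (2 * n - 1))) * vEnt (n - 1) (k - 1)
        - ((4 * ((n : ℚ) - 1) ^ 2) / (2 * n * (2 * n - 1))) * vEnt (n - 1) k) := by
  constructor
  · exact part1
  · intro n k hn hk hkn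
    obtain ⟨m, rfl⟩ : ∃ m, n = m + 1 := ⟨n - 1, by omega⟩
    obtain ⟨j, rfl⟩ : ∃ j, k = j + 1 := ⟨k - 1, by omega⟩
    simp only [Nat.add_sub_cancel]
    have h := key_s14 m j (by omega) (by omega)
    push_cast
    linear_combination h
end

section
/- For every real x, ∑_{k=1}^{∞} (k(k+1)/2^k) · sinh(x)/cosh(x)^{2k+3} = 4 sinh(2x)/cosh(2x)³. -/
lemma choose_two_cast (n : ℕ) : (((n + 2).choose 2 : ℕ) : ℝ) = ((n : ℝ) + 1) * ((n : ℝ) + 2) / 2 := by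
  induction n with
  | zero => norm_num
  | succ n ih =>
      have : (n + 1 + 2).choose 2 = (n + 2).choose 1 + (n + 2).choose 2 := rfl
      rw [this, Nat.choose_one_right]
      push_cast [ih]
      ring

theorem stmt_19 (x : ℝ) :
    ∑' k : ℕ, (((k : ℝ) + 1) * ((k : ℝ) + 2) / 2 ^ (k + 1)) *
      (Real.sinh x / Real.cosh x ^ (2 * (k + 1) + 3))
    = 4 * Real.sinh (2 * x) / Real.cosh (2 * x) ^ 3 := by
  have hc : (1 : ℝ) ≤ Real.cosh x := Real.one_le_cosh x
  have hc0 : Real.cosh x ≠ 0 := by positivity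
  set r : ℝ := (2 * Real.cosh x ^ 2)⁻¹ with hr_def
  have hrpos : 0 < r := by positivity
  have hrle : r ≤ 1 / 2 := by
    rw [hr_def]
    rw [inv_le_comm₀ (by positivity) (by norm_num)]
    nlinarith
  have hr : ‖r‖ < 1 := by
    rw [Real.norm_eq_abs, abs_of_pos hrpos]; linarith
  have hsum := (Summable.hasSum_iff
    ((summable_choose_mul_geometric_of_norm_lt_one 2 hr).mul_right
      (Real.sinh x / Real.cosh x ^ 5))).2 rfl
  have key : ∀ n : ℕ, (((n + 2).choose 2 : ℝ) * r ^ n) * (Real.sinh x / Real.cosh x ^ 5)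
      = (((n : ℝ) + 1) * ((n : ℝ) + 2) / 2 ^ (n + 1)) *
        (Real.sinh x / Real.cosh x ^ (2 * (n + 1) + 3)) := by
    intro n
    rw [choose_two_cast, hr_def, show 2 * (n + 1) + 3 = 2 * n + 5 by ring,
      show Real.cosh x ^ (2 * n + 5) = (Real.cosh x ^ 2) ^ n * Real.cosh x ^ 5 by
        rw [← pow_mul, ← pow_add], mul_inv, mul_pow, pow_succ]
    field_simp
    ring_nf
    have h1 : Real.cosh x ^ (n * 2) * (Real.cosh x)⁻¹ ^ (n * 2) = 1 := by
      rw [← mul_pow, mul_inv_cancel₀ hc0, one_pow]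
    have h2 : (1 / 2 : ℝ) ^ n * 2 ^ n = 1 := by rw [← mul_pow]; norm_num
    linear_combination (2 * Real.sinh x * (1 / 2 : ℝ) ^ n * 2 ^ n) * h1 + (2 * Real.sinh x) * h2
  have htsum : ∑' n : ℕ, (((n : ℝ) + 1) * ((n : ℝ) + 2) / 2 ^ (n + 1)) *
      (Real.sinh x / Real.cosh x ^ (2 * (n + 1) + 3))
      = (1 / (1 - r) ^ (2 + 1)) * (Real.sinh x / Real.cosh x ^ 5) := by
    rw [← ((hasSum_choose_mul_geometric_of_norm_lt_one 2 hr).mul_right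
      (Real.sinh x / Real.cosh x ^ 5)).tsum_eq]
    exact tsum_congr fun n => (key n).symm
  rw [htsum]
  have h2 : Real.cosh (2 * x) = 2 * Real.cosh x ^ 2 - 1 := by
    rw [Real.cosh_two_mul, Real.sinh_sq]; ring
  have hs2 : Real.sinh (2 * x) = 2 * Real.sinh x * Real.cosh x := Real.sinh_two_mul x
  have hne : 2 * Real.cosh x ^ 2 - 1 ≠ 0 := by nlinarith
  have h1r : 1 - r ≠ 0 := by
    have : r < 1 := by linarith
    linarith [this]
  rw [h2, hs2, hr_def]
  field_simp
  have h6 : Real.cosh x ^ 6 * (Real.cosh x)⁻¹ ^ 6 = 1 := by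
    rw [← mul_pow, mul_inv_cancel₀ hc0, one_pow]
  linear_combination (-(Real.sinh x * (8 * Real.cosh x ^ 6 - 12 * Real.cosh x ^ 4 + 6 * Real.cosh x ^ 2 - 1))) * h6
end
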